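/- arXiv:1907.08829 — 3 statements merged into one kernel-verified Lean document; each statement's English description precedes it below -/
import Mathlib

section
/- Suppose in addition that B̂ is irreducible. Then every equilibrium (p^{S*}, p^{I*}) ∈ Δ_N of the network SIRI dynamics with p^{I*} ≠ 0 satisfies p^{I*}_j > 0 for all j and p^{S*} = 0. -/
open Matrix Filter Topology

/-- Spectral radius of a real matrix: sup of absolute values of its complex eigenvalues. -/
noncomputable def specRad (N : ℕ) (A : Matrix (Fin N) (Fin N) ℝ) : ℝ :=
  sSup {r : ℝ | ∃ μ ∈ spectrum ℂ (A.map (Complex.ofReal : ℝ → ℂ)), r = ‖μ‖}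

/-- Spectral abscissa of a real matrix: sup of real parts of its complex eigenvalues. -/
noncomputable def specAbsc (N : ℕ) (A : Matrix (Fin N) (Fin N) ℝ) : ℝ :=
  sSup {r : ℝ | ∃ μ ∈ spectrum ℂ (A.map (Complex.ofReal : ℝ → ℂ)), r = μ.re}

/-- Irreducibility of a nonnegative matrix. -/
def MatIrreducible (N : ℕ) (A : Matrix (Fin N) (Fin N) ℝ) : Prop :=
  ∀ i j : Fin N, ∃ m : ℕ, 0 < m ∧ 0 < (A ^ m) i j

/-- The cube [0,1]^N. -/
def cube (N : ℕ) : Set (Fin N → ℝ) := {p | ∀ j, 0 ≤ p j ∧ p j ≤ 1}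

/-- B*(p) = (I − diag p) B̂ + diag p · B. -/
noncomputable def Bstar (N : ℕ) (B Bh : Matrix (Fin N) (Fin N) ℝ) (p : Fin N → ℝ) :
    Matrix (Fin N) (Fin N) ℝ :=
  (1 - Matrix.diagonal p) * Bh + Matrix.diagonal p * B

/-- The network SIRI vector field on (p^S, p^I). -/
noncomputable def siriField (N : ℕ) (B Bh D : Matrix (Fin N) (Fin N) ℝ)
    (y : (Fin N → ℝ) × (Fin N → ℝ)) : (Fin N → ℝ) × (Fin N → ℝ) :=
  (fun j => -(y.1 j * (B *ᵥ y.2) j),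
   fun j => ((Bstar N B Bh y.1 - D) *ᵥ y.2) j - y.2 j * (Bh *ᵥ y.2) j)

/-- Membership in the state space Δ_N. -/
def inSimplex (N : ℕ) (y : (Fin N → ℝ) × (Fin N → ℝ)) : Prop :=
  ∀ j, 0 ≤ y.1 j ∧ 0 ≤ y.2 j ∧ y.1 j + y.2 j ≤ 1

/-- y is a solution of the SIRI dynamics for t ≥ 0. -/
def IsSol (N : ℕ) (B Bh D : Matrix (Fin N) (Fin N) ℝ)
    (y : ℝ → (Fin N → ℝ) × (Fin N → ℝ)) : Prop :=
  ∀ t : ℝ, 0 ≤ t → HasDerivAt y (siriField N B Bh D (y t)) t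

/-- Reproduction number R(p) = ρ(B*(p) D⁻¹). -/
noncomputable def Rnum (N : ℕ) (B Bh D : Matrix (Fin N) (Fin N) ℝ) (p : Fin N → ℝ) : ℝ :=
  specRad N (Bstar N B Bh p * D⁻¹)

/-- Maximum basic reproduction number. -/
noncomputable def Rmax (N : ℕ) (B Bh D : Matrix (Fin N) (Fin N) ℝ) : ℝ :=
  sSup (Rnum N B Bh D '' cube N)

/-- Minimum basic reproduction number. -/
noncomputable def Rmin (N : ℕ) (B Bh D : Matrix (Fin N) (Fin N) ℝ) : ℝ :=
  sInf (Rnum N B Bh D '' cube N)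

lemma pow_entry_nonneg {N : ℕ} (A : Matrix (Fin N) (Fin N) ℝ) (hA : ∀ i j, 0 ≤ A i j) :
    ∀ m i j, 0 ≤ (A ^ m) i j := by
  intro m
  induction m with
  | zero => intro i j; simp only [pow_zero, Matrix.one_apply]; split <;> norm_num
  | succ n ih =>
    intro i j
    rw [pow_succ]
    simp only [Matrix.mul_apply]
    exact Finset.sum_nonneg fun l _ => mul_nonneg (ih i l) (hA l j)

lemma zero_chain {N : ℕ} (A : Matrix (Fin N) (Fin N) ℝ) (hA : ∀ i j, 0 ≤ A i j)
    (p : Fin N → ℝ)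
    (hstep : ∀ k m, p k = 0 → 0 < A k m → p m = 0) :
    ∀ n k j, 0 < (A ^ n) k j → p k = 0 → p j = 0 := by
  intro n
  induction n with
  | zero =>
    intro k j h hk
    simp only [pow_zero, Matrix.one_apply] at h
    split at h
    · subst ‹k = j›; exact hk
    · exact absurd h (lt_irrefl 0)
  | succ n ih =>
    intro k j h hk
    rw [pow_succ'] at h
    simp only [Matrix.mul_apply] at h
    obtain ⟨l, -, hl⟩ := Finset.exists_lt_of_sum_lt (by simpa using h :
      (Finset.univ.sum fun _ : Fin N => (0:ℝ)) < Finset.univ.sum fun l => A k l * (A ^ n) l j)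
    rcases mul_pos_iff.mp hl with ⟨h1, h2⟩ | ⟨h1, _⟩
    · exact ih l j h2 (hstep k l hk h1)
    · exact absurd h1 (not_lt.mpr (hA k l))

/-- with B̂ irreducible, every non-infection-free equilibrium has
p^I ≫ 0 and p^S = 0. -/
theorem stmt1 {N : ℕ} (hN : 2 ≤ N) (B Bh : Matrix (Fin N) (Fin N) ℝ) (δ : Fin N → ℝ)
    (hB : ∀ j k, 0 ≤ B j k) (hBirr : MatIrreducible N B)
    (hBh : ∀ j k, 0 ≤ Bh j k) (hz : ∀ j k, B j k = 0 → Bh j k = 0)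
    (hBhirr : MatIrreducible N Bh)
    (hδ : ∀ j, 0 < δ j)
    (pS pI : Fin N → ℝ) (hmem : inSimplex N (pS, pI))
    (heq : siriField N B Bh (Matrix.diagonal δ) (pS, pI) = 0)
    (hne : pI ≠ 0) :
    (∀ j, 0 < pI j) ∧ pS = 0 := by
  have hpIn : ∀ j, 0 ≤ pI j := fun j => (hmem j).2.1
  have hpSn : ∀ j, 0 ≤ pS j := fun j => (hmem j).1
  have hpS1 : ∀ j, pS j ≤ 1 := fun j =>
    le_trans (le_add_of_nonneg_right (hpIn j)) (hmem j).2.2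
  have h1 : ∀ j, pS j * (B *ᵥ pI) j = 0 := by
    intro j
    have := congrFun (congrArg Prod.fst heq) j
    simpa [siriField, neg_eq_zero] using this
  have h2 : ∀ j, (1 - pS j) * (Bh *ᵥ pI) j + pS j * (B *ᵥ pI) j
      - δ j * pI j - pI j * (Bh *ᵥ pI) j = 0 := by
    intro j
    have h := congrFun (congrArg Prod.snd heq) j
    simp only [siriField, Prod.snd] at h
    have hexp : ((Bstar N B Bh pS - Matrix.diagonal δ) *ᵥ pI) j
        = (1 - pS j) * (Bh *ᵥ pI) j + pS j * (B *ᵥ pI) j - δ j * pI j := by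
      simp only [Bstar, Matrix.sub_mulVec, Matrix.add_mulVec, ← Matrix.mulVec_mulVec,
        Matrix.one_mulVec, Matrix.mulVec_diagonal, Pi.sub_apply, Pi.add_apply]
      ring
    rw [hexp] at h
    simpa using h
  have hBhsum : ∀ k, (Bh *ᵥ pI) k = ∑ l, Bh k l * pI l := by
    intro k; simp [Matrix.mulVec, dotProduct]
  have hBsum : ∀ k, (B *ᵥ pI) k = ∑ l, B k l * pI l := by
    intro k; simp [Matrix.mulVec, dotProduct]
  -- step lemma
  have hstep : ∀ k m, pI k = 0 → 0 < Bh k m → pI m = 0 := by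
    intro k m hk hkm
    have e2 := h2 k
    rw [hk] at e2
    have e1 := h1 k
    have hX : (1 - pS k) * (Bh *ᵥ pI) k = 0 := by linarith
    rcases lt_or_eq_of_le (hpS1 k) with hlt | heq1
    · have hX0 : (Bh *ᵥ pI) k = 0 := by
        rcases mul_eq_zero.mp hX with h | h
        · exact absurd h (by intro h'; linarith)
        · exact h
      rw [hBhsum] at hX0
      have := (Finset.sum_eq_zero_iff_of_nonneg
        (fun l _ => mul_nonneg (hBh k l) (hpIn l))).mp hX0 m (Finset.mem_univ m)
      rcases mul_eq_zero.mp this with h | h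
      · exact absurd h (ne_of_gt hkm)
      · exact h
    · have hY0 : (B *ᵥ pI) k = 0 := by
        rcases mul_eq_zero.mp e1 with h | h
        · exfalso; rw [heq1] at h; norm_num at h
        · exact h
      have hBkm : 0 < B k m := by
        rcases lt_or_eq_of_le (hB k m) with h | h
        · exact h
        · exact absurd (hz k m h.symm) (ne_of_gt hkm)
      rw [hBsum] at hY0
      have := (Finset.sum_eq_zero_iff_of_nonneg
        (fun l _ => mul_nonneg (hB k l) (hpIn l))).mp hY0 m (Finset.mem_univ m)
      rcases mul_eq_zero.mp this with h | h
      · exact absurd h (ne_of_gt hBkm)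
      · exact h
  obtain ⟨j0, hj0⟩ := Function.ne_iff.mp hne
  have hj0 : pI j0 ≠ 0 := by simpa using hj0
  have hpos : ∀ j, 0 < pI j := by
    intro j
    rcases lt_or_eq_of_le (hpIn j) with h | h
    · exact h
    · exfalso
      obtain ⟨m, -, hm⟩ := hBhirr j j0
      exact hj0 (zero_chain Bh hBh pI hstep m j j0 hm h.symm)
  refine ⟨hpos, funext fun j => ?_⟩
  obtain ⟨m, hm0, hm⟩ := hBirr j j
  obtain ⟨n, rfl⟩ : ∃ n, m = n + 1 := ⟨m - 1, by omega⟩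
  rw [pow_succ'] at hm
  simp only [Matrix.mul_apply] at hm
  obtain ⟨l, -, hl⟩ := Finset.exists_lt_of_sum_lt (by simpa using hm :
    (Finset.univ.sum fun _ : Fin N => (0:ℝ)) < Finset.univ.sum fun l => B j l * (B ^ n) l j)
  have hBjl : 0 < B j l := by
    rcases mul_pos_iff.mp hl with ⟨h', -⟩ | ⟨h', -⟩
    · exact h'
    · exact absurd h' (not_lt.mpr (hB j l))
  have hBvpos : 0 < (B *ᵥ pI) j := by
    rw [hBsum]
    exact Finset.sum_pos' (fun i _ => mul_nonneg (hB j i) (hpIn i))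
      ⟨l, Finset.mem_univ l, mul_pos hBjl (hpos l)⟩
  show pS j = 0
  have := h1 j
  rcases mul_eq_zero.mp this with h | h
  · exact h
  · exact absurd h (ne_of_gt hBvpos)
end

section
/- Assume B̂ is irreducible. Then there exists a vector p^{I*} with p^{I*}_j > 0 for all j satisfying p^{I*}_j = (Σ_k β̂_{jk} p^{I*}_k)/(δ_j + Σ_k β̂_{jk} p^{I*}_k) for all j if and only if R_1 = ρ(B̂ D^{−1}) > 1. Moreover, when R_1 > 1 this vector is unique and satisfies 0 < p^{I*}_j < 1 for all j. -/
open Matrix Filter Topology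

namespace S3
variable {N : ℕ}

attribute [local instance] Matrix.linftyOpNormedRing Matrix.linftyOpNormedAlgebra

lemma pownn {A : Matrix (Fin N) (Fin N) ℝ} (hA : ∀ i j, 0 ≤ A i j) :
    ∀ m i j, 0 ≤ (A ^ m) i j := by
  intro m
  induction m with
  | zero => intro i j; simp [Matrix.one_apply]; split_ifs <;> norm_num
  | succ m ih =>
    intro i j
    rw [pow_succ, Matrix.mul_apply]
    exact Finset.sum_nonneg fun k _ => mul_nonneg (ih i k) (hA k j)

lemma row_pos {A : Matrix (Fin N) (Fin N) ℝ} (hA : ∀ i j, 0 ≤ A i j)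
    (hirr : MatIrreducible N A) (j : Fin N) : ∃ l, 0 < A j l := by
  obtain ⟨m, hm, hpos⟩ := hirr j j
  obtain ⟨m', rfl⟩ : ∃ m', m = m' + 1 := ⟨m - 1, by omega⟩
  rw [pow_succ', Matrix.mul_apply] at hpos
  by_contra h
  push_neg at h
  have : ∀ k ∈ Finset.univ, A j k * (A ^ m') k j = 0 := by
    intro k _
    have h1 : A j k = 0 := le_antisymm (h k) (hA j k)
    rw [h1, zero_mul]
  rw [Finset.sum_eq_zero this] at hpos
  exact lt_irrefl 0 hpos

lemma irr_of_dom {A B : Matrix (Fin N) (Fin N) ℝ} (hB : ∀ i j, 0 ≤ B i j)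
    (hA : ∀ i j, 0 ≤ A i j) (hAB : ∀ i j, 0 < B i j → 0 < A i j)
    (hirr : MatIrreducible N B) : MatIrreducible N A := by
  have key : ∀ m i j, 0 < (B ^ m) i j → 0 < (A ^ m) i j := by
    intro m
    induction m with
    | zero => intro i j h; simpa using h
    | succ m ih =>
      intro i j h
      rw [pow_succ', Matrix.mul_apply] at h ⊢
      obtain ⟨k, -, hk⟩ := Finset.exists_lt_of_sum_lt (by simpa using h :
        ∑ k : Fin N, (0:ℝ) < ∑ k, B i k * (B ^ m) k j)
      have hBik : 0 < B i k := by
        rcases lt_or_eq_of_le (hB i k) with h' | h'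
        · exact h'
        · exfalso; rw [← h', zero_mul] at hk; exact lt_irrefl 0 hk
      have hBm : 0 < (B ^ m) k j := by
        by_contra hc
        push_neg at hc
        have : (B ^ m) k j = 0 := le_antisymm hc (pownn hB m k j)
        rw [this, mul_zero] at hk; exact lt_irrefl 0 hk
      have : 0 < A i k * (A ^ m) k j := mul_pos (hAB i k hBik) (ih k j hBm)
      refine lt_of_lt_of_le this ?_
      refine Finset.single_le_sum (fun l _ => mul_nonneg (hA i l) (pownn hA m l j)) (Finset.mem_univ k)
  intro i j
  obtain ⟨m, hm, hpos⟩ := hirr i j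
  exact ⟨m, hm, key m i j hpos⟩

lemma iter_ge {A : Matrix (Fin N) (Fin N) ℝ} (hA : ∀ i j, 0 ≤ A i j)
    {w : Fin N → ℝ} (hw : ∀ j, 0 ≤ w j) {lam : ℝ} (hlam : 0 ≤ lam)
    (h : ∀ j, lam * w j ≤ ∑ k, A j k * w k) :
    ∀ n j, lam ^ n * w j ≤ ∑ k, (A ^ n) j k * w k := by
  intro n
  induction n with
  | zero => intro j; simp [Matrix.one_apply]
  | succ n ih =>
    intro j
    have e1 : ∑ k, (A ^ (n+1)) j k * w k = ∑ l, A j l * ∑ k, (A ^ n) l k * w k := by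
      simp_rw [pow_succ', Matrix.mul_apply, Finset.sum_mul, Finset.mul_sum]
      rw [Finset.sum_comm]
      congr 1; ext l; congr 1; ext k; ring
    rw [e1]
    have h2 : ∑ l, A j l * (lam ^ n * w l) ≤ ∑ l, A j l * ∑ k, (A ^ n) l k * w k :=
      Finset.sum_le_sum fun l _ => mul_le_mul_of_nonneg_left (ih l) (hA j l)
    have h3 : lam ^ (n+1) * w j ≤ ∑ l, A j l * (lam ^ n * w l) := by
      have := h j
      calc lam ^ (n+1) * w j = lam ^ n * (lam * w j) := by ring
        _ ≤ lam ^ n * ∑ k, A j k * w k :=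
          mul_le_mul_of_nonneg_left (h j) (pow_nonneg hlam n)
        _ = ∑ l, A j l * (lam ^ n * w l) := by rw [Finset.mul_sum]; congr 1; ext l; ring
    linarith

lemma eigvec {A : Matrix (Fin N) (Fin N) ℂ} {μ : ℂ} (h : μ ∈ spectrum ℂ A) :
    ∃ z : Fin N → ℂ, z ≠ 0 ∧ ∀ j, ∑ k, A j k * z k = μ * z j := by
  have h1 : ¬ IsUnit (algebraMap ℂ (Matrix (Fin N) (Fin N) ℂ) μ - A) := spectrum.mem_iff.mp h
  rw [Matrix.isUnit_iff_isUnit_det, isUnit_iff_ne_zero, not_not] at h1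
  obtain ⟨v, hv0, hv⟩ := (Matrix.exists_mulVec_eq_zero_iff).mpr h1
  refine ⟨v, hv0, fun j => ?_⟩
  rw [sub_mulVec, sub_eq_zero] at hv
  have h2 := congrFun hv j
  simp only [Matrix.mulVec, dotProduct, Matrix.algebraMap_eq_diagonal,
    Matrix.mulVec_diagonal] at h2
  rw [← h2]
  simp [Matrix.diagonal_apply, ite_mul]

lemma abs_bound {A : Matrix (Fin N) (Fin N) ℝ} {μ : ℂ}
    (h : μ ∈ spectrum ℂ (A.map (Complex.ofReal : ℝ → ℂ))) :
    ‖μ‖ ≤ ∑ j, ∑ k, |A j k| := by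
  obtain ⟨z, hz0, hz⟩ := eigvec h
  obtain ⟨j0, -, hj0⟩ := Finset.exists_max_image Finset.univ (fun j => ‖z j‖)
    (by simpa using Finset.univ_nonempty_iff.mpr ⟨(Function.ne_iff.mp hz0).choose⟩)
  have hzj0 : 0 < ‖z j0‖ := by
    obtain ⟨k, hk⟩ := Function.ne_iff.mp hz0
    calc (0:ℝ) < ‖z k‖ := by simpa using hk
      _ ≤ _ := hj0 k (Finset.mem_univ k)
  have key : ‖μ‖ * ‖z j0‖ ≤ (∑ j, ∑ k, |A j k|) * ‖z j0‖ := by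
    calc ‖μ‖ * ‖z j0‖ = ‖μ * z j0‖ := (norm_mul _ _).symm
      _ = ‖∑ k, (A.map (Complex.ofReal : ℝ → ℂ)) j0 k * z k‖ := by rw [hz j0]
      _ ≤ ∑ k, ‖(A.map (Complex.ofReal : ℝ → ℂ)) j0 k * z k‖ := by
          simpa using norm_sum_le Finset.univ (fun k => (A.map (Complex.ofReal : ℝ → ℂ)) j0 k * z k)
      _ = ∑ k, |A j0 k| * ‖z k‖ := by
          congr 1; ext k; rw [norm_mul]; simp [Matrix.map_apply, Complex.norm_real]
      _ ≤ ∑ k, |A j0 k| * ‖z j0‖ :=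
          Finset.sum_le_sum fun k _ => mul_le_mul_of_nonneg_left (hj0 k (Finset.mem_univ k)) (abs_nonneg _)
      _ = (∑ k, |A j0 k|) * ‖z j0‖ := by rw [Finset.sum_mul]
      _ ≤ (∑ j, ∑ k, |A j k|) * ‖z j0‖ := by
          refine mul_le_mul_of_nonneg_right ?_ hzj0.le
          exact Finset.single_le_sum (f := fun j => ∑ k, |A j k|)
            (fun j _ => Finset.sum_nonneg fun k _ => abs_nonneg _) (Finset.mem_univ j0)
  exact le_of_mul_le_mul_right key hzj0

lemma spec_bdd (A : Matrix (Fin N) (Fin N) ℝ) :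
    BddAbove {r : ℝ | ∃ μ ∈ spectrum ℂ (A.map (Complex.ofReal : ℝ → ℂ)), r = ‖μ‖} := by
  refine ⟨∑ j, ∑ k, |A j k|, fun r hr => ?_⟩
  obtain ⟨μ, hμ, rfl⟩ := hr
  exact abs_bound hμ


lemma spec_to_vec {A : Matrix (Fin N) (Fin N) ℝ} (hA : ∀ i j, 0 ≤ A i j)
    (hirr : MatIrreducible N A) (h : 1 < specRad N A) :
    ∃ (u : Fin N → ℝ) (lam : ℝ), 1 < lam ∧ (∀ j, 0 < u j) ∧
      ∀ j, lam * u j ≤ ∑ k, A j k * u k := by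
  classical
  set S := {r : ℝ | ∃ μ ∈ spectrum ℂ (A.map (Complex.ofReal : ℝ → ℂ)), r = ‖μ‖} with hS
  have hSne : S.Nonempty := by
    by_contra hc
    rw [Set.not_nonempty_iff_eq_empty] at hc
    rw [specRad, ← hS, hc, Real.sSup_empty] at h
    linarith
  obtain ⟨r, hrS, hr1⟩ := exists_lt_of_lt_csSup hSne h
  obtain ⟨μ, hμ, rfl⟩ := hrS
  obtain ⟨z, hz0, hz⟩ := eigvec hμ
  set lam := ‖μ‖ with hlamdef
  have hlam1 : (1:ℝ) < lam := hr1
  have hlam0 : (0:ℝ) < lam := by linarith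
  set w : Fin N → ℝ := fun j => ‖z j‖ with hw
  have hw0 : ∀ j, 0 ≤ w j := fun j => norm_nonneg _
  obtain ⟨k0, hk0⟩ : ∃ k0, 0 < w k0 := by
    obtain ⟨k, hk⟩ := Function.ne_iff.mp hz0
    exact ⟨k, by simpa [hw] using hk⟩
  have hwineq : ∀ j, lam * w j ≤ ∑ k, A j k * w k := by
    intro j
    calc lam * w j = ‖μ * z j‖ := by rw [norm_mul]
      _ = ‖∑ k, (A.map (Complex.ofReal : ℝ → ℂ)) j k * z k‖ := by rw [hz j]
      _ ≤ ∑ k, ‖(A.map (Complex.ofReal : ℝ → ℂ)) j k * z k‖ := by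
          simpa using norm_sum_le Finset.univ
            (fun k => (A.map (Complex.ofReal : ℝ → ℂ)) j k * z k)
      _ = ∑ k, A j k * w k := by
          refine Finset.sum_congr rfl fun k _ => ?_
          rw [norm_mul]
          simp [Matrix.map_apply, Complex.norm_real, abs_of_nonneg (hA j k), hw]
  -- choose path lengths to k0
  choose m hm1 hm2 using fun j => hirr j k0
  set K := Finset.univ.sup m with hK
  set T : ℕ → Fin N → ℝ := fun i j => ∑ k, (A ^ i) j k * w k with hT
  have hTnn : ∀ i j, 0 ≤ T i j := fun i j =>
    Finset.sum_nonneg fun k _ => mul_nonneg (pownn hA i j k) (hw0 k)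
  set u : Fin N → ℝ := fun j => ∑ i ∈ Finset.range (K+1), (lam⁻¹) ^ i * T i j with hu
  have hc0 : ∀ i : ℕ, (0:ℝ) < (lam⁻¹) ^ i := fun i => pow_pos (inv_pos.mpr hlam0) i
  have hupos : ∀ j, 0 < u j := by
    intro j
    refine Finset.sum_pos' (fun i _ => mul_nonneg (hc0 i).le (hTnn i j)) ?_
    refine ⟨m j, Finset.mem_range.mpr (Nat.lt_succ_of_le (Finset.le_sup (Finset.mem_univ j))), ?_⟩
    refine mul_pos (hc0 (m j)) ?_
    have : (A ^ m j) j k0 * w k0 ≤ T (m j) j :=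
      Finset.single_le_sum (fun k _ => mul_nonneg (pownn hA (m j) j k) (hw0 k))
        (Finset.mem_univ k0)
    have h2 : 0 < (A ^ m j) j k0 * w k0 := mul_pos (hm2 j) hk0
    linarith
  refine ⟨u, lam, hlam1, hupos, fun j => ?_⟩
  -- RHS computation
  have hRHS : ∑ k, A j k * u k = ∑ i ∈ Finset.range (K+1), (lam⁻¹) ^ i * T (i+1) j := by
    simp only [hu, Finset.mul_sum]
    rw [Finset.sum_comm]
    refine Finset.sum_congr rfl fun i _ => ?_
    have : ∑ k, A j k * ((lam⁻¹) ^ i * T i k) = (lam⁻¹) ^ i * ∑ k, A j k * T i k := by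
      rw [Finset.mul_sum]; refine Finset.sum_congr rfl fun k _ => by ring
    rw [this]
    congr 1
    -- ∑ k, A j k * T i k = T (i+1) j
    simp only [hT]
    rw [pow_succ']
    simp_rw [Matrix.mul_apply, Finset.sum_mul, Finset.mul_sum]
    rw [Finset.sum_comm]
    refine Finset.sum_congr rfl fun k _ => Finset.sum_congr rfl fun l _ => by ring
  have hT0 : T 0 j = w j := by simp [hT, Matrix.one_apply]
  have hLHS : lam * u j = lam * w j + ∑ i ∈ Finset.range K, (lam⁻¹) ^ i * T (i+1) j := by
    simp only [hu]
    rw [Finset.sum_range_succ']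
    rw [mul_add, hT0]
    simp only [pow_zero, one_mul]
    rw [add_comm (lam * _), Finset.mul_sum]
    congr 1
    refine Finset.sum_congr rfl fun i _ => ?_
    have : lam * ((lam⁻¹) ^ (i+1) * T (i+1) j) = (lam * lam⁻¹) * ((lam⁻¹) ^ i * T (i+1) j) := by
      rw [pow_succ']; ring
    rw [this, mul_inv_cancel₀ (ne_of_gt hlam0), one_mul]
  have hfinal : lam * w j ≤ (lam⁻¹) ^ K * T (K+1) j := by
    have h1 : lam ^ (K+1) * w j ≤ T (K+1) j := iter_ge hA hw0 hlam0.le hwineq (K+1) j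
    have h2 : (lam⁻¹) ^ K * (lam ^ (K+1) * w j) ≤ (lam⁻¹) ^ K * T (K+1) j :=
      mul_le_mul_of_nonneg_left h1 (hc0 K).le
    have h3 : (lam⁻¹) ^ K * (lam ^ (K+1) * w j) = lam * w j := by
      rw [pow_succ]
      field_simp
      rw [← mul_pow, one_div, inv_mul_cancel₀ (ne_of_gt hlam0), one_pow, one_mul]
    linarith
  rw [hRHS, hLHS, Finset.sum_range_succ]
  linarith

lemma vec_to_spec (hN : 0 < N) {A : Matrix (Fin N) (Fin N) ℝ} (hA : ∀ i j, 0 ≤ A i j)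
    {q : Fin N → ℝ} (hq : ∀ j, 0 < q j) {lam : ℝ} (hlam : 1 < lam)
    (h : ∀ j, lam * q j ≤ ∑ k, A j k * q k) : 1 < specRad N A := by
  classical
  have hlam0 : (0:ℝ) < lam := by linarith
  set Ac : Matrix (Fin N) (Fin N) ℂ := A.map (Complex.ofReal : ℝ → ℂ) with hAc
  have hpow : ∀ n : ℕ, Ac ^ n = (A ^ n).map (Complex.ofReal : ℝ → ℂ) := by
    intro n
    have : Ac = (Complex.ofRealHom.mapMatrix : Matrix (Fin N) (Fin N) ℝ →+* _) A := rfl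
    rw [this, ← _root_.map_pow]
    rfl
  set j0 : Fin N := ⟨0, hN⟩ with hj0
  have hne : (Finset.univ : Finset (Fin N)).Nonempty := ⟨j0, Finset.mem_univ j0⟩
  set Qmax : ℝ := Finset.univ.sup' hne q with hQ
  have hQpos : 0 < Qmax := lt_of_lt_of_le (hq j0) (Finset.le_sup' q (Finset.mem_univ j0))
  have hqle : ∀ k, q k ≤ Qmax := fun k => Finset.le_sup' q (Finset.mem_univ k)
  set c : ℝ := q j0 / Qmax with hc
  have hcpos : 0 < c := div_pos (hq j0) hQpos
  -- row sum lower bound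
  have hrow : ∀ n : ℕ, c * lam ^ n ≤ ∑ k, (A ^ n) j0 k := by
    intro n
    have h1 : lam ^ n * q j0 ≤ ∑ k, (A ^ n) j0 k * q k := iter_ge hA (fun j => (hq j).le) hlam0.le h n j0
    have h2 : ∑ k, (A ^ n) j0 k * q k ≤ (∑ k, (A ^ n) j0 k) * Qmax := by
      rw [Finset.sum_mul]
      exact Finset.sum_le_sum fun k _ => mul_le_mul_of_nonneg_left (hqle k) (pownn hA n j0 k)
    rw [hc, div_mul_eq_mul_div, div_le_iff₀ hQpos]
    calc q j0 * lam ^ n = lam ^ n * q j0 := by ring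
      _ ≤ ∑ k, (A ^ n) j0 k * q k := h1
      _ ≤ (∑ k, (A ^ n) j0 k) * Qmax := h2
  -- norm lower bound
  have hnorm : ∀ n : ℕ, c * lam ^ n ≤ ‖Ac ^ n‖ := by
    intro n
    refine le_trans (hrow n) ?_
    have h1 : ∑ k, (A ^ n) j0 k = ∑ k, ‖(Ac ^ n) j0 k‖ := by
      refine Finset.sum_congr rfl fun k _ => ?_
      rw [hpow n]
      simp [Matrix.map_apply, Complex.norm_real,
        abs_of_nonneg (pownn hA n j0 k)]
    rw [h1]
    have := Matrix.linfty_opNNNorm_def (Ac ^ n)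
    have h2 : (∑ k, ‖(Ac ^ n) j0 k‖₊) ≤ ‖Ac ^ n‖₊ := by
      rw [this]
      exact Finset.le_sup (f := fun i => ∑ k, ‖(Ac ^ n) i k‖₊) (Finset.mem_univ j0)
    calc ∑ k, ‖(Ac ^ n) j0 k‖ = ((∑ k, ‖(Ac ^ n) j0 k‖₊ : NNReal) : ℝ) := by
          push_cast; rfl
      _ ≤ ‖Ac ^ n‖ := by exact_mod_cast h2
  -- Gelfand
  set μ : ℝ := (1 + lam) / 2 with hμ
  have hμ1 : 1 < μ := by rw [hμ]; linarith
  have hμlam : μ < lam := by rw [hμ]; linarith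
  have hμ0 : 0 < μ := by linarith
  have hev : ∀ᶠ n : ℕ in atTop, ENNReal.ofReal μ ≤ (‖Ac ^ n‖₊ : ENNReal) ^ (1 / (n:ℝ)) := by
    have htend : Tendsto (fun n : ℕ => (μ / lam) ^ n) atTop (𝓝 0) :=
      tendsto_pow_atTop_nhds_zero_of_lt_one (by positivity) (by rw [div_lt_one hlam0]; exact hμlam)
    have hev1 : ∀ᶠ n : ℕ in atTop, (μ / lam) ^ n < c := htend.eventually (eventually_lt_nhds hcpos)
    filter_upwards [hev1, Filter.eventually_ge_atTop 1] with n hn hn1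
    have hμn : μ ^ n ≤ c * lam ^ n := by
      have : (μ / lam) ^ n * lam ^ n ≤ c * lam ^ n :=
        mul_le_mul_of_nonneg_right hn.le (by positivity)
      rwa [div_pow, div_mul_cancel₀] at this
      positivity
    have hb : ENNReal.ofReal (μ ^ n) ≤ (‖Ac ^ n‖₊ : ENNReal) := by
      rw [← enorm_eq_nnnorm, ← ofReal_norm]
      exact ENNReal.ofReal_le_ofReal (le_trans hμn (hnorm n))
    have h3 : (ENNReal.ofReal (μ ^ n)) ^ (1 / (n:ℝ)) ≤ (‖Ac ^ n‖₊ : ENNReal) ^ (1 / (n:ℝ)) :=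
      ENNReal.rpow_le_rpow hb (by positivity)
    have h4 : (ENNReal.ofReal (μ ^ n)) ^ (1 / (n:ℝ)) = ENNReal.ofReal μ := by
      rw [ENNReal.ofReal_pow hμ0.le]
      rw [← ENNReal.rpow_natCast (ENNReal.ofReal μ) n, ← ENNReal.rpow_mul]
      rw [mul_one_div, div_self (by exact_mod_cast Nat.one_le_iff_ne_zero.mp hn1), ENNReal.rpow_one]
    rwa [h4] at h3
  have hgel := spectrum.pow_nnnorm_pow_one_div_tendsto_nhds_spectralRadius Ac
  have hsr : ENNReal.ofReal μ ≤ spectralRadius ℂ Ac := ge_of_tendsto hgel hev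
  have hsr1 : (1 : ENNReal) < spectralRadius ℂ Ac := by
    refine lt_of_lt_of_le ?_ hsr
    rw [← ENNReal.ofReal_one]
    exact ENNReal.ofReal_lt_ofReal_iff hμ0 |>.mpr hμ1
  -- extract eigenvalue with norm > 1
  rw [spectralRadius, lt_iSup_iff] at hsr1
  obtain ⟨k, hk⟩ := hsr1
  rw [lt_iSup_iff] at hk
  obtain ⟨hkmem, hk1⟩ := hk
  have habs : 1 < ‖k‖ := by
    have := ENNReal.one_lt_coe_iff.mp hk1
    exact_mod_cast this
  refine lt_of_lt_of_le habs ?_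
  exact le_csSup (spec_bdd A) ⟨k, hkmem, rfl⟩

noncomputable def gfun (Bh : Matrix (Fin N) (Fin N) ℝ) (p : Fin N → ℝ) (j : Fin N) : ℝ :=
  ∑ k, Bh j k * p k

noncomputable def Ffun (Bh : Matrix (Fin N) (Fin N) ℝ) (δ : Fin N → ℝ) (p : Fin N → ℝ)
    (j : Fin N) : ℝ := gfun Bh p j / (δ j + gfun Bh p j)

variable {Bh : Matrix (Fin N) (Fin N) ℝ} {δ : Fin N → ℝ}

lemma gnn (hBh : ∀ j k, 0 ≤ Bh j k) {p : Fin N → ℝ} (hp : ∀ j, 0 ≤ p j) (j : Fin N) :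
    0 ≤ gfun Bh p j :=
  Finset.sum_nonneg fun k _ => mul_nonneg (hBh j k) (hp k)

lemma gmono (hBh : ∀ j k, 0 ≤ Bh j k) {p q : Fin N → ℝ} (hpq : ∀ j, p j ≤ q j) (j : Fin N) :
    gfun Bh p j ≤ gfun Bh q j :=
  Finset.sum_le_sum fun k _ => mul_le_mul_of_nonneg_left (hpq k) (hBh j k)

lemma gsmul (Bh : Matrix (Fin N) (Fin N) ℝ) (c : ℝ) (p : Fin N → ℝ) (j : Fin N) :
    gfun Bh (fun k => c * p k) j = c * gfun Bh p j := by
  rw [gfun, gfun, Finset.mul_sum]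
  exact Finset.sum_congr rfl fun k _ => by ring

lemma frac_mono {d a b : ℝ} (hd : 0 < d) (ha : 0 ≤ a) (hab : a ≤ b) :
    a / (d + a) ≤ b / (d + b) := by
  rw [div_le_div_iff₀ (by linarith) (by linarith)]
  nlinarith

lemma frac_lt_one {d a : ℝ} (hd : 0 < d) (ha : 0 ≤ a) : a / (d + a) < 1 := by
  rw [div_lt_one (by linarith)]; linarith

lemma frac_nonneg {d a : ℝ} (hd : 0 < d) (ha : 0 ≤ a) : 0 ≤ a / (d + a) :=
  div_nonneg ha (by linarith)

lemma exists_fp (hN : 0 < N) (hBh : ∀ j k, 0 ≤ Bh j k) (hδ : ∀ j, 0 < δ j)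
    {v : Fin N → ℝ} (hv : ∀ j, 0 < v j) (hstrict : ∀ j, δ j * v j < gfun Bh v j) :
    ∃ p : Fin N → ℝ, (∀ j, 0 < p j ∧ p j < 1) ∧
      ∀ j, p j = gfun Bh p j / (δ j + gfun Bh p j) := by
  classical
  have hne : (Finset.univ : Finset (Fin N)).Nonempty := ⟨⟨0, hN⟩, Finset.mem_univ _⟩
  have hgv : ∀ j, 0 < gfun Bh v j := fun j =>
    lt_of_le_of_lt (mul_nonneg (hδ j).le (hv j).le) (hstrict j)
  set ε : ℝ := Finset.univ.inf' hne
    (fun j => min ((gfun Bh v j - δ j * v j) / (v j * gfun Bh v j)) (v j)⁻¹) with hε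
  have hεpos : 0 < ε := by
    rw [hε, Finset.lt_inf'_iff]
    intro j _
    refine lt_min (div_pos (by linarith [hstrict j]) (mul_pos (hv j) (hgv j))) (inv_pos.mpr (hv j))
  have hεle1 : ∀ j, ε * v j ≤ 1 := by
    intro j
    have h1 : ε ≤ (v j)⁻¹ := le_trans (Finset.inf'_le _ (Finset.mem_univ j)) (min_le_right _ _)
    calc ε * v j ≤ (v j)⁻¹ * v j := mul_le_mul_of_nonneg_right h1 (hv j).le
      _ = 1 := inv_mul_cancel₀ (ne_of_gt (hv j))
  set p0 : Fin N → ℝ := fun j => ε * v j with hp0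
  set Fn : (Fin N → ℝ) → (Fin N → ℝ) := fun p j => Ffun Bh δ p j with hFn
  have hεstep : ∀ j, p0 j ≤ Fn p0 j := by
    intro j
    have hgp0 : gfun Bh p0 j = ε * gfun Bh v j := gsmul Bh ε v j
    have hεle : ε * (v j * gfun Bh v j) ≤ gfun Bh v j - δ j * v j := by
      have h1 : ε ≤ (gfun Bh v j - δ j * v j) / (v j * gfun Bh v j) :=
        le_trans (Finset.inf'_le _ (Finset.mem_univ j)) (min_le_left _ _)
      rw [← le_div_iff₀ (mul_pos (hv j) (hgv j))]
      exact h1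
    have hd : 0 < δ j + ε * gfun Bh v j := by
      have := mul_pos hεpos (hgv j); linarith [hδ j]
    have hFval : Fn p0 j = ε * gfun Bh v j / (δ j + ε * gfun Bh v j) := by
      simp only [hFn, Ffun]
      rw [hgp0]
    rw [hFval, hp0, le_div_iff₀ hd]
    show ε * v j * (δ j + ε * gfun Bh v j) ≤ ε * gfun Bh v j
    have h2 : ε * (ε * (v j * gfun Bh v j)) ≤ ε * (gfun Bh v j - δ j * v j) :=
      mul_le_mul_of_nonneg_left hεle hεpos.le
    nlinarith
  -- basic properties of iterates
  have hnn : ∀ n j, 0 ≤ Fn^[n] p0 j := by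
    intro n
    induction n with
    | zero => intro j; simpa [hp0] using (mul_pos hεpos (hv j)).le
    | succ n ih =>
      intro j
      rw [Function.iterate_succ_apply']
      exact frac_nonneg (hδ j) (gnn hBh ih j)
  have hFmono : ∀ p q : Fin N → ℝ, (∀ j, 0 ≤ p j) → (∀ j, p j ≤ q j) → ∀ j, Fn p j ≤ Fn q j := by
    intro p q hp hpq j
    exact frac_mono (hδ j) (gnn hBh hp j) (gmono hBh hpq j)
  have hmono : ∀ n j, Fn^[n] p0 j ≤ Fn^[n+1] p0 j := by
    intro n
    induction n with
    | zero => intro j; simpa using hεstep j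
    | succ n ih =>
      intro j
      rw [Function.iterate_succ_apply', Function.iterate_succ_apply']
      exact hFmono _ _ (hnn n) ih j
  have hub : ∀ n j, Fn^[n] p0 j ≤ 1 := by
    intro n
    induction n with
    | zero => intro j; simpa [hp0] using hεle1 j
    | succ n ih =>
      intro j
      rw [Function.iterate_succ_apply']
      exact (frac_lt_one (hδ j) (gnn hBh (hnn n) j)).le
  have hlow : ∀ n j, p0 j ≤ Fn^[n] p0 j := by
    intro n
    induction n with
    | zero => intro j; rfl
    | succ n ih => intro j; exact le_trans (ih j) (hmono n j)
  have hmon2 : ∀ j, Monotone fun n => Fn^[n] p0 j :=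
    fun j => monotone_nat_of_le_succ fun n => hmono n j
  have hbdd : ∀ j, BddAbove (Set.range fun n => Fn^[n] p0 j) := by
    intro j
    refine ⟨1, ?_⟩
    rintro x ⟨n, rfl⟩
    exact hub n j
  set pL : Fin N → ℝ := fun j => ⨆ n, Fn^[n] p0 j with hpL
  have htend : ∀ j, Tendsto (fun n => Fn^[n] p0 j) atTop (𝓝 (pL j)) :=
    fun j => tendsto_atTop_ciSup (hmon2 j) (hbdd j)
  have hpLlb : ∀ j, p0 j ≤ pL j := by
    intro j
    exact le_trans (le_refl _) (le_ciSup (hbdd j) 0)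
  have hpLnn : ∀ j, 0 ≤ pL j := fun j => le_trans (mul_pos hεpos (hv j)).le (hpLlb j)
  have hgt : ∀ j, Tendsto (fun n => gfun Bh (Fn^[n] p0) j) atTop (𝓝 (gfun Bh pL j)) := by
    intro j
    rw [gfun]
    simp_rw [gfun]
    exact tendsto_finset_sum _ fun k _ => ((htend k).const_mul _)
  have heq : ∀ j, pL j = gfun Bh pL j / (δ j + gfun Bh pL j) := by
    intro j
    have hdpos : 0 < δ j + gfun Bh pL j := by
      have := gnn hBh hpLnn j
      linarith [hδ j]
    have h1 : Tendsto (fun n => Fn (Fn^[n] p0) j) atTop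
        (𝓝 (gfun Bh pL j / (δ j + gfun Bh pL j))) := by
      simp only [hFn, Ffun]
      exact (hgt j).div (tendsto_const_nhds.add (hgt j)) (ne_of_gt hdpos)
    have h2 : (fun n => Fn (Fn^[n] p0) j) = fun n => Fn^[n+1] p0 j := by
      funext n
      rw [Function.iterate_succ_apply']
    rw [h2] at h1
    have h3 : Tendsto (fun n => Fn^[n+1] p0 j) atTop (𝓝 (pL j)) :=
      (htend j).comp (tendsto_add_atTop_nat 1)
    exact tendsto_nhds_unique h3 h1
  refine ⟨pL, fun j => ⟨?_, ?_⟩, heq⟩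
  · have h0 : 0 < p0 j := mul_pos hεpos (hv j)
    linarith [hpLlb j]
  · rw [heq j]
    exact frac_lt_one (hδ j) (gnn hBh hpLnn j)

lemma fp_le (hN : 0 < N) (hBh : ∀ j k, 0 ≤ Bh j k) (hrow : ∀ j, ∃ l, 0 < Bh j l)
    (hδ : ∀ j, 0 < δ j) {p q : Fin N → ℝ} (hp : ∀ j, 0 < p j) (hq : ∀ j, 0 < q j)
    (hpeq : ∀ j, p j = gfun Bh p j / (δ j + gfun Bh p j))
    (hqeq : ∀ j, q j = gfun Bh q j / (δ j + gfun Bh q j)) : ∀ j, p j ≤ q j := by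
  classical
  have hne : (Finset.univ : Finset (Fin N)).Nonempty := ⟨⟨0, hN⟩, Finset.mem_univ _⟩
  have hgp : ∀ j, 0 < gfun Bh p j := by
    intro j
    obtain ⟨l, hl⟩ := hrow j
    have h1 : Bh j l * p l ≤ gfun Bh p j :=
      Finset.single_le_sum (fun k _ => mul_nonneg (hBh j k) (hp k).le) (Finset.mem_univ l)
    nlinarith [hp l]
  set θ : ℝ := Finset.univ.inf' hne (fun j => q j / p j) with hθ
  have hθpos : 0 < θ := by
    rw [hθ, Finset.lt_inf'_iff]
    exact fun j _ => div_pos (hq j) (hp j)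
  have hθle : ∀ j, θ * p j ≤ q j := by
    intro j
    have h1 : θ ≤ q j / p j := Finset.inf'_le _ (Finset.mem_univ j)
    rw [le_div_iff₀ (hp j)] at h1
    linarith
  obtain ⟨j0, -, hj0⟩ := Finset.exists_mem_eq_inf' hne (fun j => q j / p j)
  have hqj0 : q j0 = θ * p j0 := by
    rw [hθ.trans hj0, div_mul_eq_mul_div]
    exact (mul_div_cancel_right₀ _ (ne_of_gt (hp j0))).symm
  by_cases hθ1 : 1 ≤ θ
  · intro j
    calc p j = 1 * p j := (one_mul _).symm
      _ ≤ θ * p j := mul_le_mul_of_nonneg_right hθ1 (hp j).le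
      _ ≤ q j := hθle j
  · exfalso
    push_neg at hθ1
    have hθp : ∀ j, 0 ≤ θ * p j := fun j => mul_nonneg hθpos.le (hp j).le
    have h1 : gfun Bh (fun k => θ * p k) j0 ≤ gfun Bh q j0 := gmono hBh hθle j0
    have h2 : gfun Bh (fun k => θ * p k) j0 = θ * gfun Bh p j0 := gsmul Bh θ p j0
    have h3 : θ * gfun Bh p j0 / (δ j0 + θ * gfun Bh p j0) ≤ q j0 := by
      rw [hqeq j0]
      refine frac_mono (hδ j0) (mul_nonneg hθpos.le (hgp j0).le) ?_
      rw [← h2]; exact h1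
    have h4 : θ * (gfun Bh p j0 / (δ j0 + gfun Bh p j0)) <
        θ * gfun Bh p j0 / (δ j0 + θ * gfun Bh p j0) := by
      rw [mul_div_assoc'] 
      refine div_lt_div_of_pos_left (mul_pos hθpos (hgp j0))
        (add_pos (hδ j0) (mul_pos hθpos (hgp j0))) ?_
      have := hgp j0
      nlinarith
    rw [← hpeq j0] at h4
    rw [hqj0] at h3
    linarith

end S3

/-- existence and uniqueness of the endemic equilibrium iff R₁ > 1. -/
theorem stmt3 {N : ℕ} (hN : 2 ≤ N) (Bh : Matrix (Fin N) (Fin N) ℝ) (δ : Fin N → ℝ)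
    (hBh : ∀ j k, 0 ≤ Bh j k) (hBhirr : MatIrreducible N Bh)
    (hδ : ∀ j, 0 < δ j) :
    ((∃ pI : Fin N → ℝ, (∀ j, 0 < pI j) ∧
        ∀ j, pI j = (∑ k, Bh j k * pI k) / (δ j + ∑ k, Bh j k * pI k)) ↔
      1 < specRad N (Bh * (Matrix.diagonal δ)⁻¹))
    ∧ (1 < specRad N (Bh * (Matrix.diagonal δ)⁻¹) →
        ∃! pI : Fin N → ℝ, (∀ j, 0 < pI j ∧ pI j < 1) ∧
          ∀ j, pI j = (∑ k, Bh j k * pI k) / (δ j + ∑ k, Bh j k * pI k)) := by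
  have hN0 : 0 < N := by omega
  have hne : (Finset.univ : Finset (Fin N)).Nonempty := ⟨⟨0, hN0⟩, Finset.mem_univ _⟩
  set M : Matrix (Fin N) (Fin N) ℝ := Bh * (Matrix.diagonal δ)⁻¹ with hMdef
  have hMentry : ∀ i j, M i j = Bh i j * (δ j)⁻¹ := by
    intro i j
    have hdi : (Matrix.diagonal δ)⁻¹ = Matrix.diagonal (fun k => (δ k)⁻¹) := by
      refine Matrix.inv_eq_right_inv ?_
      rw [Matrix.diagonal_mul_diagonal]
      rw [show (fun k => δ k * (δ k)⁻¹) = fun _ => (1:ℝ) from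
        funext fun k => mul_inv_cancel₀ (ne_of_gt (hδ k))]
      exact Matrix.diagonal_one
    rw [hMdef, hdi, Matrix.mul_diagonal]
  have hMnn : ∀ i j, 0 ≤ M i j := fun i j => by
    rw [hMentry]; exact mul_nonneg (hBh i j) (inv_pos.mpr (hδ j)).le
  have hMirr : MatIrreducible N M :=
    S3.irr_of_dom hBh hMnn
      (fun i j hb => by rw [hMentry]; exact mul_pos hb (inv_pos.mpr (hδ j))) hBhirr
  have hrow : ∀ j, ∃ l, 0 < Bh j l := fun j => S3.row_pos hBh hBhirr j
  have fwd : (∃ pI : Fin N → ℝ, (∀ j, 0 < pI j) ∧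
      ∀ j, pI j = (∑ k, Bh j k * pI k) / (δ j + ∑ k, Bh j k * pI k)) →
      1 < specRad N M := by
    rintro ⟨p, hp, heqp⟩
    have heqp' : ∀ j, p j = S3.gfun Bh p j / (δ j + S3.gfun Bh p j) := heqp
    have hgp : ∀ j, 0 < S3.gfun Bh p j := by
      intro j
      obtain ⟨l, hl⟩ := hrow j
      have h1 : Bh j l * p l ≤ S3.gfun Bh p j :=
        Finset.single_le_sum (fun k _ => mul_nonneg (hBh j k) (hp k).le) (Finset.mem_univ l)
      nlinarith [hp l]
    have hstrict : ∀ j, δ j * p j < S3.gfun Bh p j := by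
      intro j
      have hd : 0 < δ j + S3.gfun Bh p j := by linarith [hδ j, hgp j]
      have h1 : p j * (δ j + S3.gfun Bh p j) = S3.gfun Bh p j := by
        rw [heqp' j, div_mul_cancel₀ _ (ne_of_gt hd)]
      have hplt : p j < 1 := by
        rw [heqp' j]; exact S3.frac_lt_one (hδ j) (hgp j).le
      nlinarith [hp j, hgp j]
    set q : Fin N → ℝ := fun j => δ j * p j with hq
    have hqpos : ∀ j, 0 < q j := fun j => mul_pos (hδ j) (hp j)
    have hMq : ∀ j, ∑ k, M j k * q k = S3.gfun Bh p j := by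
      intro j
      rw [S3.gfun]
      refine Finset.sum_congr rfl fun k _ => ?_
      rw [hMentry]
      show Bh j k * (δ k)⁻¹ * (δ k * p k) = Bh j k * p k
      rw [mul_assoc, inv_mul_cancel_left₀ (ne_of_gt (hδ k))]
    set lam : ℝ := Finset.univ.inf' hne (fun j => (∑ k, M j k * q k) / q j) with hlam
    have hlam1 : 1 < lam := by
      rw [hlam, Finset.lt_inf'_iff]
      intro j _
      rw [lt_div_iff₀ (hqpos j), one_mul, hMq j]
      exact hstrict j
    have hlamle : ∀ j, lam * q j ≤ ∑ k, M j k * q k := by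
      intro j
      have h1 : lam ≤ (∑ k, M j k * q k) / q j :=
        Finset.inf'_le _ (Finset.mem_univ j)
      rw [le_div_iff₀ (hqpos j)] at h1
      linarith
    exact S3.vec_to_spec hN0 hMnn hqpos hlam1 hlamle
  have bwd : 1 < specRad N M → ∃ p : Fin N → ℝ, (∀ j, 0 < p j ∧ p j < 1) ∧
      ∀ j, p j = S3.gfun Bh p j / (δ j + S3.gfun Bh p j) := by
    intro h
    obtain ⟨u, lam, hlam1, hupos, hineq⟩ := S3.spec_to_vec hMnn hMirr h
    set v : Fin N → ℝ := fun j => (δ j)⁻¹ * u j with hv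
    have hvpos : ∀ j, 0 < v j := fun j => mul_pos (inv_pos.mpr (hδ j)) (hupos j)
    have hgv : ∀ j, S3.gfun Bh v j = ∑ k, M j k * u k := by
      intro j
      rw [S3.gfun]
      refine Finset.sum_congr rfl fun k _ => ?_
      rw [hMentry]
      show Bh j k * ((δ k)⁻¹ * u k) = Bh j k * (δ k)⁻¹ * u k
      ring
    have hstrict : ∀ j, δ j * v j < S3.gfun Bh v j := by
      intro j
      rw [hgv j]
      have h1 : δ j * v j = u j := by
        show δ j * ((δ j)⁻¹ * u j) = u j
        rw [mul_inv_cancel_left₀ (ne_of_gt (hδ j))]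
      rw [h1]
      calc u j < lam * u j := by nlinarith [hupos j]
        _ ≤ ∑ k, M j k * u k := hineq j
    exact S3.exists_fp hN0 hBh hδ hvpos hstrict
  refine ⟨⟨fwd, fun h => ?_⟩, fun h => ?_⟩
  · obtain ⟨p, hp, heq⟩ := bwd h
    exact ⟨p, fun j => (hp j).1, heq⟩
  · obtain ⟨p, hp, heq⟩ := bwd h
    refine ⟨p, ⟨hp, heq⟩, ?_⟩
    rintro r ⟨hr, hreq⟩
    funext j
    have hreq' : ∀ j, r j = S3.gfun Bh r j / (δ j + S3.gfun Bh r j) := hreq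
    exact le_antisymm
      (S3.fp_le hN0 hBh hrow hδ (fun j => (hr j).1) (fun j => (hp j).1) hreq' heq j)
      (S3.fp_le hN0 hBh hrow hδ (fun j => (hp j).1) (fun j => (hr j).1) heq hreq' j)
end

section
/- Assume B and B̂ are irreducible. Let p* ∈ [0,1]^N with Λ(p*) > 0. Then the infection-free equilibrium (p*, 0) is unstable for the network SIRI dynamics restricted to Δ_N: there exists ε > 0 such that for every δ > 0 there is an initial condition y(0) ∈ Δ_N with ‖y(0) − (p*,0)‖ < δ whose solution y(t) satisfies ‖y(t) − (p*,0)‖ ≥ ε for some t > 0. -/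
open Matrix Filter Topology

open Set

section A
variable {N : ℕ}

/-- entrywise nonneg product -/
lemma entry_mul_nonneg {P Q : Matrix (Fin N) (Fin N) ℝ} (hP : ∀ i j, 0 ≤ P i j)
    (hQ : ∀ i j, 0 ≤ Q i j) : ∀ i j, 0 ≤ (P * Q) i j := by
  intro i j
  rw [Matrix.mul_apply]
  exact Finset.sum_nonneg fun k _ => mul_nonneg (hP i k) (hQ k j)

lemma entry_mul_mono {P Q P' Q' : Matrix (Fin N) (Fin N) ℝ}
    (hP : ∀ i j, 0 ≤ P i j) (hPQ : ∀ i j, P i j ≤ Q i j)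
    (hP' : ∀ i j, 0 ≤ P' i j) (hPQ' : ∀ i j, P' i j ≤ Q' i j) :
    ∀ i j, (P * P') i j ≤ (Q * Q') i j := by
  intro i j
  rw [Matrix.mul_apply, Matrix.mul_apply]
  apply Finset.sum_le_sum
  intro k _
  exact mul_le_mul (hPQ i k) (hPQ' k j) (hP' k j) (le_trans (hP i k) (hPQ i k))

lemma entry_pow_nonneg {P : Matrix (Fin N) (Fin N) ℝ} (hP : ∀ i j, 0 ≤ P i j) (n : ℕ) :
    ∀ i j, 0 ≤ (P ^ n) i j := by
  induction n with
  | zero => intro i j; simp [Matrix.one_apply]; positivity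
  | succ n ih =>
      rw [pow_succ]
      exact entry_mul_nonneg ih hP

lemma entry_pow_mono {P Q : Matrix (Fin N) (Fin N) ℝ}
    (hP : ∀ i j, 0 ≤ P i j) (hPQ : ∀ i j, P i j ≤ Q i j) (n : ℕ) :
    ∀ i j, (P ^ n) i j ≤ (Q ^ n) i j := by
  induction n with
  | zero => intro i j; simp
  | succ n ih =>
      rw [pow_succ, pow_succ]
      exact entry_mul_mono (entry_pow_nonneg hP n) ih hP hPQ

/-- matrices entrywise ≥ identity -/
lemma entry_mul_ge_id {P Q : Matrix (Fin N) (Fin N) ℝ}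
    (hP0 : ∀ i j, 0 ≤ P i j) (hQ0 : ∀ i j, 0 ≤ Q i j)
    (hP : ∀ i, 1 ≤ P i i) (hQ : ∀ i, 1 ≤ Q i i) :
    (∀ i j, 0 ≤ (P * Q) i j) ∧ (∀ i, 1 ≤ (P * Q) i i) := by
  refine ⟨entry_mul_nonneg hP0 hQ0, fun i => ?_⟩
  rw [Matrix.mul_apply]
  calc (1:ℝ) ≤ P i i * Q i i := by nlinarith [hP i, hQ i]
    _ ≤ ∑ k, P i k * Q k i := by
        apply Finset.single_le_sum (f := fun k => P i k * Q k i)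
          (fun k _ => mul_nonneg (hP0 i k) (hQ0 k i)) (Finset.mem_univ i)

lemma entry_pow_ge_id {P : Matrix (Fin N) (Fin N) ℝ}
    (hP0 : ∀ i j, 0 ≤ P i j) (hP : ∀ i, 1 ≤ P i i) (n : ℕ) :
    (∀ i j, 0 ≤ (P ^ n) i j) ∧ (∀ i, 1 ≤ (P ^ n) i i) := by
  induction n with
  | zero => refine ⟨fun i j => ?_, fun i => by simp⟩
            simp [Matrix.one_apply]; positivity
  | succ n ih =>
      rw [pow_succ]
      exact entry_mul_ge_id ih.1 hP0 ih.2 hP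

/-- power monotone in exponent for matrices ≥ id -/
lemma entry_pow_le_pow {P : Matrix (Fin N) (Fin N) ℝ}
    (hP0 : ∀ i j, 0 ≤ P i j) (hP : ∀ i, 1 ≤ P i i) {m K : ℕ} (h : m ≤ K) :
    ∀ i j, (P ^ m) i j ≤ (P ^ K) i j := by
  intro i j
  obtain ⟨a, rfl⟩ := Nat.exists_eq_add_of_le h
  have hpm := entry_pow_ge_id hP0 hP m
  have hpa := entry_pow_ge_id hP0 hP a
  rw [add_comm m a, pow_add, Matrix.mul_apply]
  calc (P ^ m) i j ≤ (P ^ a) i i * (P ^ m) i j := by nlinarith [hpa.2 i, hpm.1 i j]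
    _ ≤ ∑ k, (P ^ a) i k * (P ^ m) k j :=
        Finset.single_le_sum (f := fun k => (P ^ a) i k * (P ^ m) k j)
          (fun k _ => mul_nonneg (hpa.1 i k) (hpm.1 k j)) (Finset.mem_univ i)

end A

section A2
variable {N : ℕ}

lemma mulVec_entry_mono {W : Matrix (Fin N) (Fin N) ℝ} (hW : ∀ i j, 0 ≤ W i j)
    {a b : Fin N → ℝ} (hab : ∀ j, a j ≤ b j) : ∀ i, (W *ᵥ a) i ≤ (W *ᵥ b) i := by
  intro i
  unfold Matrix.mulVec dotProduct
  exact Finset.sum_le_sum fun j _ => mul_le_mul_of_nonneg_left (hab j) (hW i j)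

/-- From positive spectral abscissa, get an eigenvalue with positive real part. -/
lemma exists_eig_pos_re {N : ℕ} (A : Matrix (Fin N) (Fin N) ℝ)
    (h : 0 < specAbsc N A) :
    ∃ μ ∈ spectrum ℂ (A.map (Complex.ofReal : ℝ → ℂ)), 0 < μ.re := by
  set S := {r : ℝ | ∃ μ ∈ spectrum ℂ (A.map (Complex.ofReal : ℝ → ℂ)), r = μ.re} with hS
  have hne : S.Nonempty := by
    by_contra hc
    rw [Set.not_nonempty_iff_eq_empty] at hc
    rw [specAbsc, ← hS, hc, Real.sSup_empty] at h
    exact lt_irrefl _ h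
  have := exists_lt_of_lt_csSup hne (by simpa [specAbsc, hS] using h)
  obtain ⟨r, hr, hr0⟩ := this
  obtain ⟨μ, hμ, rfl⟩ := hr
  exact ⟨μ, hμ, hr0⟩

/-- eigenvector of the transpose for an element of the spectrum -/
lemma exists_transpose_eigenvec {N : ℕ} (A : Matrix (Fin N) (Fin N) ℝ) {μ : ℂ}
    (hμ : μ ∈ spectrum ℂ (A.map (Complex.ofReal : ℝ → ℂ))) :
    ∃ x : Fin N → ℂ, x ≠ 0 ∧ (Aᵀ.map (Complex.ofReal : ℝ → ℂ)) *ᵥ x = μ • x := by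
  rw [spectrum.mem_iff] at hμ
  have hdet : ((algebraMap ℂ (Matrix (Fin N) (Fin N) ℂ)) μ - A.map Complex.ofReal).det = 0 := by
    by_contra hd
    exact hμ ((Matrix.isUnit_iff_isUnit_det _).2 (Ne.isUnit hd))
  have hdetT : ((algebraMap ℂ (Matrix (Fin N) (Fin N) ℂ)) μ - Aᵀ.map Complex.ofReal).det = 0 := by
    have : ((algebraMap ℂ (Matrix (Fin N) (Fin N) ℂ)) μ - A.map Complex.ofReal)ᵀ
        = (algebraMap ℂ (Matrix (Fin N) (Fin N) ℂ)) μ - Aᵀ.map Complex.ofReal := by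
      rw [Matrix.transpose_sub, Matrix.transpose_map]
      congr 1
      simp [Matrix.algebraMap_eq_diagonal]
    rw [← this, Matrix.det_transpose]
    exact hdet
  obtain ⟨v, hv0, hv⟩ := (Matrix.exists_mulVec_eq_zero_iff).2 hdetT
  refine ⟨v, hv0, ?_⟩
  have hexp : (algebraMap ℂ (Matrix (Fin N) (Fin N) ℂ)) μ *ᵥ v = μ • v := by
    simp [Matrix.algebraMap_eq_diagonal, Matrix.diagonal_mulVec_single]
    funext i
    simp [Matrix.mulVec_diagonal]
  have := hv
  rw [Matrix.sub_mulVec, sub_eq_zero] at this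
  rw [← this, hexp]

/-- abstract Perron-type lemma -/
lemma exists_pos_supervector {N : ℕ} (M G : Matrix (Fin N) (Fin N) ℝ)
    (hM : ∀ i j, 0 ≤ M i j) (hG : ∀ i j, 0 ≤ G i j)
    {c : ℝ} (hc : 0 < c) (hcG : ∀ i j, c * G i j ≤ M i j)
    (hGirr : ∀ i j : Fin N, ∃ m : ℕ, 0 < m ∧ 0 < (G ^ m) i j)
    {u : Fin N → ℝ} (hu : ∀ j, 0 ≤ u j) (hu0 : u ≠ 0)
    {ρ : ℝ} (hρu : ∀ k, ρ * u k ≤ (M *ᵥ u) k) :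
    ∃ w : Fin N → ℝ, (∀ i, 0 < w i) ∧ ∀ k, ρ * w k ≤ (M *ᵥ w) k := by
  classical
  choose m hm1 hm2 using hGirr
  set K : ℕ := Finset.univ.sup (fun p : Fin N × Fin N => m p.1 p.2) with hK
  set P : Matrix (Fin N) (Fin N) ℝ := 1 + M with hP
  have hP0 : ∀ i j, 0 ≤ P i j := by
    intro i j
    simp only [hP, Matrix.add_apply, Matrix.one_apply]
    by_cases hij : i = j
    · simp [hij]; linarith [hM j j]
    · simp [hij]; exact hM i j
  have hPdiag : ∀ i, 1 ≤ P i i := by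
    intro i
    simp only [hP, Matrix.add_apply, Matrix.one_apply_eq]
    linarith [hM i i]
  -- P ≥ c•G entrywise
  have hcGP : ∀ i j, (c • G) i j ≤ P i j := by
    intro i j
    simp only [Matrix.smul_apply, smul_eq_mul, hP, Matrix.add_apply, Matrix.one_apply]
    by_cases hij : i = j
    · simp [hij]; linarith [hcG j j, hG j j, mul_nonneg hc.le (hG j j)]
    · simp [hij]; linarith [hcG i j]
  have hcG0 : ∀ i j, 0 ≤ (c • G) i j := fun i j => by
    simp only [Matrix.smul_apply, smul_eq_mul]; exact mul_nonneg hc.le (hG i j)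
  set W : Matrix (Fin N) (Fin N) ℝ := P ^ K with hW
  have hW0 : ∀ i j, 0 ≤ W i j := (entry_pow_ge_id hP0 hPdiag K).1
  have hWpos : ∀ i j, 0 < W i j := by
    intro i j
    have hmK : m i j ≤ K := Finset.le_sup (f := fun p : Fin N × Fin N => m p.1 p.2)
      (Finset.mem_univ (i, j))
    have h1 : ((c • G) ^ (m i j)) i j ≤ (P ^ (m i j)) i j :=
      entry_pow_mono hcG0 hcGP (m i j) i j
    have h2 : (P ^ (m i j)) i j ≤ W i j := entry_pow_le_pow hP0 hPdiag hmK i j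
    have h3 : ((c • G) ^ (m i j)) i j = c ^ (m i j) * (G ^ (m i j)) i j := by
      rw [smul_pow, Matrix.smul_apply, smul_eq_mul]
    have : 0 < ((c • G) ^ (m i j)) i j := by
      rw [h3]; exact mul_pos (pow_pos hc _) (hm2 i j)
    linarith
  refine ⟨W *ᵥ u, ?_, ?_⟩
  · intro i
    obtain ⟨j0, hj0⟩ : ∃ j, 0 < u j := by
      by_contra hcon
      push_neg at hcon
      exact hu0 (funext fun j => le_antisymm (hcon j) (hu j))
    have : W i j0 * u j0 ≤ (W *ᵥ u) i := by
      unfold Matrix.mulVec dotProduct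
      exact Finset.single_le_sum (f := fun j => W i j * u j)
        (fun j _ => mul_nonneg (hW0 i j) (hu j)) (Finset.mem_univ j0)
    have hpos := mul_pos (hWpos i j0) hj0
    linarith
  · intro k
    have hcomm : M * W = W * M := by
      have h1 : Commute P M := by
        simp only [hP]
        exact (Commute.one_left M).add_left (Commute.refl M)
      exact ((h1.pow_left K)).symm
    have key : M *ᵥ (W *ᵥ u) = W *ᵥ (M *ᵥ u) := by
      rw [Matrix.mulVec_mulVec, Matrix.mulVec_mulVec, hcomm]
    have hmono := mulVec_entry_mono hW0 (a := ρ • u) (b := M *ᵥ u)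
      (fun j => by simpa [smul_eq_mul] using hρu j) k
    have hsmul : (W *ᵥ (ρ • u)) k = ρ * (W *ᵥ u) k := by
      rw [Matrix.mulVec_smul]
      simp [smul_eq_mul]
    rw [key]
    rw [hsmul] at hmono
    exact hmono

end A2

section A3
variable {N : ℕ}

lemma Bstar_apply (B Bh : Matrix (Fin N) (Fin N) ℝ) (p : Fin N → ℝ) (j k : Fin N) :
    Bstar N B Bh p j k = (1 - p j) * Bh j k + p j * B j k := by
  simp [Bstar, Matrix.sub_mul, Matrix.add_apply, Matrix.sub_apply, Matrix.diagonal_mul,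
    Matrix.one_mul]
  ring

lemma Bstar_nonneg {B Bh : Matrix (Fin N) (Fin N) ℝ} {p : Fin N → ℝ}
    (hB : ∀ j k, 0 ≤ B j k) (hBh : ∀ j k, 0 ≤ Bh j k) (hp : p ∈ cube N) :
    ∀ j k, 0 ≤ Bstar N B Bh p j k := by
  intro j k
  rw [Bstar_apply]
  have h1 := (hp j).1; have h2 := (hp j).2
  nlinarith [hB j k, hBh j k]

lemma min_le_Bstar {B Bh : Matrix (Fin N) (Fin N) ℝ} {p : Fin N → ℝ}
    (hp : p ∈ cube N) (j k : Fin N) :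
    min (B j k) (Bh j k) ≤ Bstar N B Bh p j k := by
  rw [Bstar_apply]
  have h1 := (hp j).1; have h2 := (hp j).2
  have hm1 : min (B j k) (Bh j k) ≤ B j k := min_le_left _ _
  have hm2 : min (B j k) (Bh j k) ≤ Bh j k := min_le_right _ _
  nlinarith

/-- Main Part A lemma. -/
lemma exists_left_eigen_lower {N : ℕ} (hN : 2 ≤ N) (B Bh : Matrix (Fin N) (Fin N) ℝ)
    (δ : Fin N → ℝ)
    (hB : ∀ j k, 0 ≤ B j k)
    (hBh : ∀ j k, 0 ≤ Bh j k) (hz : ∀ j k, B j k = 0 → Bh j k = 0)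
    (hBhirr : MatIrreducible N Bh)
    (hδ : ∀ j, 0 < δ j)
    (pstar : Fin N → ℝ) (hp : pstar ∈ cube N)
    (hpos : 0 < specAbsc N (Bstar N B Bh pstar - Matrix.diagonal δ)) :
    ∃ (w : Fin N → ℝ) (lam : ℝ), (∀ i, 0 < w i) ∧ 0 < lam ∧
      ∀ k, lam * w k ≤ ∑ j, w j * (Bstar N B Bh pstar - Matrix.diagonal δ) j k := by
  classical
  have hNpos : 0 < N := by omega
  haveI : NeZero N := ⟨by omega⟩
  set A : Matrix (Fin N) (Fin N) ℝ := Bstar N B Bh pstar - Matrix.diagonal δ with hA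
  obtain ⟨μ, hμspec, hμre⟩ := exists_eig_pos_re A hpos
  obtain ⟨x, hx0, hx⟩ := exists_transpose_eigenvec A hμspec
  set s : ℝ := ∑ j, δ j with hs
  have hsδ : ∀ j, δ j ≤ s := fun j =>
    Finset.single_le_sum (f := fun j => δ j) (fun i _ => (hδ i).le) (Finset.mem_univ j)
  have hs0 : 0 ≤ s := le_trans (hδ ⟨0, hNpos⟩).le (hsδ _)
  set M : Matrix (Fin N) (Fin N) ℝ := Aᵀ + s • 1 with hM
  have hAapply : ∀ j k, A j k = Bstar N B Bh pstar j k - Matrix.diagonal δ j k := by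
    intro j k; simp [hA]
  have hMapply : ∀ k j, M k j = Bstar N B Bh pstar j k - Matrix.diagonal δ j k
      + s * (if k = j then 1 else 0) := by
    intro k j
    simp [hM, Matrix.add_apply, Matrix.transpose_apply, Matrix.smul_apply, Matrix.one_apply,
      hAapply, mul_ite]
  have hM0 : ∀ k j, 0 ≤ M k j := by
    intro k j
    rw [hMapply]
    by_cases hkj : k = j
    · subst hkj
      simp [Matrix.diagonal_apply_eq]
      have := Bstar_nonneg hB hBh hp k k
      have := hsδ k
      linarith
    · have : j ≠ k := fun h => hkj h.symm
      simp [hkj, Matrix.diagonal_apply_ne _ this]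
      exact Bstar_nonneg hB hBh hp j k
  -- complex eigen relation for M
  have hMx : (M.map (Complex.ofReal : ℝ → ℂ)) *ᵥ x = (μ + s) • x := by
    have hMT : M.map (Complex.ofReal : ℝ → ℂ)
        = Aᵀ.map (Complex.ofReal : ℝ → ℂ) + (s : ℂ) • 1 := by
      ext i j
      simp [hM, Matrix.map_apply, Matrix.add_apply, Matrix.smul_apply, Matrix.one_apply]
      by_cases hij : i = j <;> simp [hij]
    rw [hMT, Matrix.add_mulVec, hx, Matrix.smul_mulVec, Matrix.one_mulVec, add_smul]
  set u : Fin N → ℝ := fun k => ‖x k‖ with hu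
  have hu0 : u ≠ 0 := by
    intro hcon
    apply hx0
    funext k
    have : u k = 0 := by rw [hcon]; rfl
    simpa [hu, map_eq_zero] using this
  have hunn : ∀ k, 0 ≤ u k := fun k => norm_nonneg _
  set ρ : ℝ := ‖μ + s‖ with hρ
  have hρu : ∀ k, ρ * u k ≤ (M *ᵥ u) k := by
    intro k
    have h1 : ρ * u k = ‖((M.map (Complex.ofReal : ℝ → ℂ)) *ᵥ x) k‖ := by
      rw [hMx]
      simp [hρ, hu, Pi.smul_apply, smul_eq_mul, norm_mul]
    have h2 : ‖((M.map (Complex.ofReal : ℝ → ℂ)) *ᵥ x) k‖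
        ≤ ∑ j, M k j * u j := by
      unfold Matrix.mulVec dotProduct
      calc ‖∑ j, (M.map (Complex.ofReal : ℝ → ℂ)) k j * x j‖
          ≤ ∑ j, ‖(M.map (Complex.ofReal : ℝ → ℂ)) k j * x j‖ :=
            norm_sum_le _ _
        _ = ∑ j, M k j * u j := by
            apply Finset.sum_congr rfl
            intro j _
            rw [norm_mul]
            simp [Matrix.map_apply, hu, Complex.norm_real, abs_of_nonneg (hM0 k j)]
    have h3 : (M *ᵥ u) k = ∑ j, M k j * u j := rfl
    rw [h3]; linarith
  -- the constant c and comparison with Bhᵀ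
  have hne : (Finset.univ : Finset (Fin N × Fin N)).Nonempty := Finset.univ_nonempty
  set c : ℝ := Finset.univ.inf' hne (fun q : Fin N × Fin N =>
    if Bh q.1 q.2 = 0 then 1 else min (B q.1 q.2) (Bh q.1 q.2) / Bh q.1 q.2) with hc
  have hcpos : 0 < c := by
    rw [hc, Finset.lt_inf'_iff]
    intro q _
    by_cases hq : Bh q.1 q.2 = 0
    · simp [hq]
    · have hBhq : 0 < Bh q.1 q.2 := lt_of_le_of_ne (hBh q.1 q.2) (Ne.symm hq)
      have hBq : 0 < B q.1 q.2 := by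
        rcases lt_or_eq_of_le (hB q.1 q.2) with h | h
        · exact h
        · exact absurd (hz q.1 q.2 h.symm) hq
      simp only [hq, if_false]
      exact div_pos (lt_min hBq hBhq) hBhq
  have hcG : ∀ i j, c * (Bhᵀ) i j ≤ M i j := by
    intro i j
    rw [Matrix.transpose_apply]
    by_cases hq : Bh j i = 0
    · rw [hq, mul_zero]; exact hM0 i j
    · have hBhq : 0 < Bh j i := lt_of_le_of_ne (hBh j i) (Ne.symm hq)
      have hcle : c ≤ min (B j i) (Bh j i) / Bh j i := by
        rw [hc]
        refine Finset.inf'_le _ (Finset.mem_univ ((j, i) : Fin N × Fin N)) |>.trans ?_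
        simp [hq]
      have h1 : c * Bh j i ≤ min (B j i) (Bh j i) := by
        rw [le_div_iff₀ hBhq] at hcle
        linarith
      have h2 : min (B j i) (Bh j i) ≤ Bstar N B Bh pstar j i := min_le_Bstar hp j i
      have h3 : Bstar N B Bh pstar j i ≤ M i j := by
        rw [hMapply]
        by_cases hij : i = j
        · subst hij
          simp [Matrix.diagonal_apply_eq]
          linarith [hsδ i]
        · have : j ≠ i := fun h => hij h.symm
          simp [hij, Matrix.diagonal_apply_ne _ this]
      linarith
  have hGirr : ∀ i j : Fin N, ∃ m : ℕ, 0 < m ∧ 0 < ((Bhᵀ) ^ m) i j := by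
    intro i j
    obtain ⟨m, hm1, hm2⟩ := hBhirr j i
    exact ⟨m, hm1, by rwa [← Matrix.transpose_pow, Matrix.transpose_apply]⟩
  obtain ⟨w, hwpos, hwineq⟩ := exists_pos_supervector M (Bhᵀ)
    hM0 (fun i j => by rw [Matrix.transpose_apply]; exact hBh j i) hcpos hcG hGirr hunn hu0 hρu
  refine ⟨w, ρ - s, hwpos, ?_, ?_⟩
  · have : μ.re + s ≤ ρ := by
      rw [hρ]
      calc μ.re + s = (μ + (s:ℂ)).re := by simp
        _ ≤ ‖μ + s‖ := Complex.re_le_norm _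
    linarith
  · intro k
    have h1 := hwineq k
    have h2 : (M *ᵥ w) k = (∑ j, w j * A j k) + s * w k := by
      have : ∀ j, M k j * w j = w j * A j k + (if k = j then s * w j else 0) := by
        intro j
        have : M k j = A j k + s * (if k = j then 1 else 0) := by
          rw [hMapply, hAapply]
        rw [this]
        by_cases hkj : k = j
        · subst hkj; simp; ring
        · simp [hkj]; ring
      unfold Matrix.mulVec dotProduct
      rw [Finset.sum_congr rfl (fun j _ => this j), Finset.sum_add_distrib]
      congr 1
      rw [Finset.sum_ite_eq (Finset.univ) k (fun j => s * w j)]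
      simp
    rw [h2] at h1
    have : ρ * w k - s * w k = (ρ - s) * w k := by ring
    rw [hA] at *
    linarith

end A3


/-- Scalar invariance lemma: a function with nonneg derivative whenever negative stays nonneg. -/
lemma nonneg_of_deriv_cond {h h' : ℝ → ℝ}
    (hd : ∀ t, 0 ≤ t → HasDerivAt h (h' t) t)
    (h0 : 0 ≤ h 0)
    (hsign : ∀ t, 0 ≤ t → h t < 0 → 0 ≤ h' t) :
    ∀ t, 0 ≤ t → 0 ≤ h t := by
  intro t₁ ht₁
  by_contra hneg
  push_neg at hneg
  have ht₁0 : t₁ ≠ 0 := by rintro rfl; linarith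
  have ht₁pos : 0 < t₁ := lt_of_le_of_ne ht₁ (Ne.symm ht₁0)
  have hcont : ∀ s, 0 ≤ s → ContinuousAt h s := fun s hs => (hd s hs).continuousAt
  set S : Set ℝ := {s | s ∈ Icc 0 t₁ ∧ 0 ≤ h s} with hS
  have hSne : S.Nonempty := ⟨0, ⟨le_refl 0, ht₁⟩, h0⟩
  have hSbdd : BddAbove S := ⟨t₁, fun s hs => hs.1.2⟩
  set s₀ : ℝ := sSup S with hs₀
  have hs₀mem : s₀ ∈ Icc 0 t₁ := by
    constructor
    · exact le_csSup hSbdd ⟨⟨le_refl 0, ht₁⟩, h0⟩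
    · exact csSup_le hSne fun s hs => hs.1.2
  have hs₀cl : s₀ ∈ closure S := by
    rw [mem_closure_iff_nhdsWithin_neBot]
    exact (isLUB_csSup hSne hSbdd).nhdsWithin_neBot hSne
  have hhs₀ : 0 ≤ h s₀ := by
    haveI hnb : (nhdsWithin s₀ S).NeBot := mem_closure_iff_nhdsWithin_neBot.1 hs₀cl
    have htend : Filter.Tendsto h (nhdsWithin s₀ S) (nhds (h s₀)) :=
      ((hcont s₀ hs₀mem.1).continuousWithinAt).tendsto
    exact ge_of_tendsto htend (Filter.eventually_of_mem self_mem_nhdsWithin fun s hs => hs.2)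
  have hs₀lt : s₀ < t₁ := by
    rcases lt_or_eq_of_le hs₀mem.2 with h | h
    · exact h
    · exfalso; rw [h] at hhs₀; linarith
  have hlt : ∀ s, s₀ < s → s ≤ t₁ → h s < 0 := by
    intro s hs hst
    by_contra hcon
    push_neg at hcon
    have : s ∈ S := ⟨⟨le_trans hs₀mem.1 hs.le, hst⟩, hcon⟩
    exact absurd (le_csSup hSbdd this) (not_le.2 hs)
  -- h is monotone on [s₀, t₁]
  have hmono : MonotoneOn h (Icc s₀ t₁) := by
    apply monotoneOn_of_deriv_nonneg (convex_Icc s₀ t₁)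
    · intro s hs
      exact (hcont s (le_trans hs₀mem.1 hs.1)).continuousWithinAt
    · intro s hs
      rw [interior_Icc] at hs
      exact ((hd s (le_trans hs₀mem.1 hs.1.le)).differentiableAt).differentiableWithinAt
    · intro s hs
      rw [interior_Icc] at hs
      have hs0 : 0 ≤ s := le_trans hs₀mem.1 hs.1.le
      rw [(hd s hs0).deriv]
      exact hsign s hs0 (hlt s hs.1 hs.2.le)
  have := hmono ⟨le_refl s₀, hs₀lt.le⟩ ⟨hs₀lt.le, le_refl t₁⟩ hs₀lt.le
  linarith

noncomputable def clamp01 (a : ℝ) : ℝ := max 0 (min a 1)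

lemma clamp01_mem (a : ℝ) : 0 ≤ clamp01 a ∧ clamp01 a ≤ 1 := by
  unfold clamp01
  constructor
  · exact le_max_left 0 _
  · apply max_le (by norm_num) (min_le_right _ _)

lemma clamp01_of_mem {a : ℝ} (h0 : 0 ≤ a) (h1 : a ≤ 1) : clamp01 a = a := by
  unfold clamp01
  rw [min_eq_left h1, max_eq_right h0]

lemma abs_clamp01_sub (a b : ℝ) : |clamp01 a - clamp01 b| ≤ |a - b| := by
  unfold clamp01
  calc |max 0 (min a 1) - max 0 (min b 1)| ≤ max |0 - 0| |min a 1 - min b 1| :=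
        abs_max_sub_max_le_max _ _ _ _
    _ ≤ max |0 - 0| (max |a - b| |1 - 1|) := by
        apply max_le_max (le_refl _) (abs_min_sub_min_le_max _ _ _ _)
    _ ≤ |a - b| := by simp [abs_nonneg]

noncomputable def retr (N : ℕ) (y : (Fin N → ℝ) × (Fin N → ℝ)) :
    (Fin N → ℝ) × (Fin N → ℝ) :=
  (fun j => clamp01 (y.1 j), fun j => max 0 (min (y.2 j) (1 - clamp01 (y.1 j))))

lemma retr_inSimplex (N : ℕ) (y : (Fin N → ℝ) × (Fin N → ℝ)) : inSimplex N (retr N y) := by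
  intro j
  have h1 := clamp01_mem (y.1 j)
  refine ⟨h1.1, le_max_left _ _, ?_⟩
  simp only [retr]
  have : max 0 (min (y.2 j) (1 - clamp01 (y.1 j))) ≤ 1 - clamp01 (y.1 j) := by
    apply max_le (by linarith [h1.2]) (min_le_right _ _)
  linarith

lemma retr_eq_self {N : ℕ} {y : (Fin N → ℝ) × (Fin N → ℝ)} (h : inSimplex N y) :
    retr N y = y := by
  have : ∀ j, clamp01 (y.1 j) = y.1 j := fun j => clamp01_of_mem (h j).1
    (by linarith [(h j).2.1, (h j).2.2])
  unfold retr
  ext j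
  · exact this j
  · simp only
    rw [this j, min_eq_left (by linarith [(h j).2.2]), max_eq_right (h j).2.1]

lemma retr_lipschitz (N : ℕ) : LipschitzWith 1 (retr N) := by
  apply LipschitzWith.of_dist_le_mul
  intro y z
  rw [NNReal.coe_one, one_mul, Prod.dist_eq]
  have hfst1 : ∀ j, dist (y.1 j) (z.1 j) ≤ dist y z := fun j =>
    le_trans (dist_le_pi_dist y.1 z.1 j)
      (le_trans (le_max_left _ (dist y.2 z.2)) (le_of_eq (Prod.dist_eq (x := y) (y := z)).symm))
  have hsnd1 : ∀ j, dist (y.2 j) (z.2 j) ≤ dist y z := fun j =>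
    le_trans (dist_le_pi_dist y.2 z.2 j)
      (le_trans (le_max_right (dist y.1 z.1) _) (le_of_eq (Prod.dist_eq (x := y) (y := z)).symm))
  apply max_le
  · rw [dist_pi_le_iff dist_nonneg]
    intro j
    rw [Real.dist_eq]
    exact le_trans (abs_clamp01_sub _ _) (by rw [← Real.dist_eq]; exact hfst1 j)
  · rw [dist_pi_le_iff dist_nonneg]
    intro j
    rw [Real.dist_eq]
    calc |max 0 (min (y.2 j) (1 - clamp01 (y.1 j))) - max 0 (min (z.2 j) (1 - clamp01 (z.1 j)))|
        ≤ max |0 - 0| |min (y.2 j) (1 - clamp01 (y.1 j)) - min (z.2 j) (1 - clamp01 (z.1 j))| :=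
          abs_max_sub_max_le_max _ _ _ _
      _ ≤ max |0 - 0| (max |y.2 j - z.2 j| |(1 - clamp01 (y.1 j)) - (1 - clamp01 (z.1 j))|) :=
          max_le_max (le_refl _) (abs_min_sub_min_le_max _ _ _ _)
      _ ≤ dist y z := by
          apply max_le
          · simp [dist_nonneg]
          apply max_le
          · rw [← Real.dist_eq]; exact hsnd1 j
          · have : |(1 - clamp01 (y.1 j)) - (1 - clamp01 (z.1 j))| = |clamp01 (z.1 j) - clamp01 (y.1 j)| := by
              congr 1; ring
            rw [this]
            calc |clamp01 (z.1 j) - clamp01 (y.1 j)| ≤ |z.1 j - y.1 j| := abs_clamp01_sub _ _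
              _ = dist (y.1 j) (z.1 j) := by rw [Real.dist_eq, abs_sub_comm]
              _ ≤ dist y z := hfst1 j


lemma Bstar_apply' (N : ℕ) (B Bh : Matrix (Fin N) (Fin N) ℝ) (p : Fin N → ℝ) (j k : Fin N) :
    Bstar N B Bh p j k = (1 - p j) * Bh j k + p j * B j k := by
  simp [Bstar, Matrix.sub_mul, Matrix.add_apply, Matrix.sub_apply, Matrix.diagonal_mul,
    Matrix.one_mul]
  ring

lemma siriField_eq (N : ℕ) (B Bh D : Matrix (Fin N) (Fin N) ℝ) :
    siriField N B Bh D = fun y =>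
      ((fun j => -(y.1 j * ∑ k, B j k * y.2 k)),
       (fun j => (∑ k, ((1 - y.1 j) * Bh j k + y.1 j * B j k - D j k) * y.2 k)
          - y.2 j * ∑ k, Bh j k * y.2 k)) := by
  funext y
  unfold siriField
  ext j
  · rfl
  · simp only [Matrix.mulVec, dotProduct, Matrix.sub_apply]
    congr 1
    · apply Finset.sum_congr rfl
      intro k _
      simp only [Bstar_apply']

lemma contDiff_siriField (N : ℕ) (B Bh D : Matrix (Fin N) (Fin N) ℝ) :
    ContDiff ℝ 1 (siriField N B Bh D) := by
  rw [siriField_eq]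
  have e1 : ∀ j : Fin N, ContDiff ℝ 1 (fun y : (Fin N → ℝ) × (Fin N → ℝ) => y.1 j) := by
    intro j
    exact ((ContinuousLinearMap.proj (R := ℝ) (φ := fun _ : Fin N => ℝ) j).contDiff).comp
      contDiff_fst
  have e2 : ∀ j : Fin N, ContDiff ℝ 1 (fun y : (Fin N → ℝ) × (Fin N → ℝ) => y.2 j) := by
    intro j
    exact ((ContinuousLinearMap.proj (R := ℝ) (φ := fun _ : Fin N => ℝ) j).contDiff).comp
      contDiff_snd
  apply ContDiff.prodMk
  · apply contDiff_pi.2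
    intro j
    apply ContDiff.neg
    apply ContDiff.mul (e1 j)
    apply ContDiff.sum
    intro k _
    exact ContDiff.mul contDiff_const (e2 k)
  · apply contDiff_pi.2
    intro j
    apply ContDiff.sub
    · apply ContDiff.sum
      intro k _
      apply ContDiff.mul
      · apply ContDiff.sub
        · apply ContDiff.add
          · exact ContDiff.mul (ContDiff.sub contDiff_const (e1 j)) contDiff_const
          · exact ContDiff.mul (e1 j) contDiff_const
        · exact contDiff_const
      · exact e2 k
    · apply ContDiff.mul (e2 j)
      apply ContDiff.sum
      intro k _
      exact ContDiff.mul contDiff_const (e2 k)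

/-- Global solutions for bounded Lipschitz fields. -/
lemma exists_global_solution {E : Type*} [NormedAddCommGroup E] [NormedSpace ℝ E]
    [CompleteSpace E] (g : E → E) (Lg : NNReal) (hLip : LipschitzWith Lg g)
    (C : ℝ) (hC : 0 ≤ C) (hbd : ∀ x, ‖g x‖ ≤ C) (x₀ : E) :
    ∃ y : ℝ → E, y 0 = x₀ ∧ ∀ t : ℝ, HasDerivAt y (g (y t)) t := by
  have hPL : ∀ n : ℕ, IsPicardLindelof (fun _ x => g x) (tmin := -(n+1 : ℝ)) (tmax := (n+1 : ℝ))
      ⟨0, by constructor <;> [linarith [Nat.cast_nonneg (α := ℝ) n]; linarith [Nat.cast_nonneg (α := ℝ) n]]⟩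
      x₀ ⟨C*(n+1)+1, by positivity⟩ 0 ⟨C, hC⟩ Lg := by
    intro n
    refine IsPicardLindelof.of_time_independent (fun x _ => hbd x) hLip.lipschitzOnWith ?_
    show C * max ((n+1 : ℝ) - 0) (0 - -(n+1 : ℝ)) ≤ (C*(n+1)+1) - 0
    rw [sub_zero, zero_sub, neg_neg, max_self, sub_zero]
    nlinarith [Nat.cast_nonneg (α := ℝ) n]
  choose f hf0 hf using fun n => (hPL n).exists_eq_forall_mem_Icc_hasDerivWithinAt₀
  have hDer : ∀ n : ℕ, ∀ t ∈ Ioo (-(n+1 : ℝ)) (n+1 : ℝ), HasDerivAt (f n) (g (f n t)) t :=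
    fun n t ht => (hf n t (Ioo_subset_Icc_self ht)).hasDerivAt (Icc_mem_nhds ht.1 ht.2)
  have hcont : ∀ n : ℕ, ContinuousOn (f n) (Icc (-(n+1 : ℝ)) (n+1 : ℝ)) :=
    fun n t ht => (hf n t ht).continuousWithinAt
  have hEq : ∀ n m : ℕ, n ≤ m → Set.EqOn (f n) (f m) (Icc (-(n+1 : ℝ)) (n+1 : ℝ)) := by
    intro n m hnm
    have hcast : (n : ℝ) ≤ (m : ℝ) := Nat.cast_le.2 hnm
    have hsub : Ioo (-(n+1 : ℝ)) (n+1 : ℝ) ⊆ Ioo (-(m+1 : ℝ)) (m+1 : ℝ) :=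
      Ioo_subset_Ioo (by linarith) (by linarith)
    exact ODE_solution_unique_of_mem_Icc (v := fun _ x => g x) (s := fun _ => univ)
      (K := Lg) (t₀ := 0) (fun _ _ => hLip.lipschitzOnWith)
      (by constructor <;> [linarith [Nat.cast_nonneg (α := ℝ) n]; linarith [Nat.cast_nonneg (α := ℝ) n]])
      (hcont n) (fun t ht => hDer n t ht) (fun t _ => trivial)
      ((hcont m).mono (Icc_subset_Icc (by linarith) (by linarith)))
      (fun t ht => hDer m t (hsub ht)) (fun t _ => trivial)
      ((hf0 n).trans (hf0 m).symm)
  refine ⟨fun t => f (⌊|t|⌋₊) t, ?_, ?_⟩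
  · simp only [abs_zero, Nat.floor_zero]
    exact hf0 0
  · intro t
    set y : ℝ → E := fun t => f (⌊|t|⌋₊) t with hy
    have key : ∀ (n : ℕ) (s : ℝ), |s| < n + 1 → y s = f n s := by
      intro n s hs
      have hk : |s| < (⌊|s|⌋₊ : ℝ) + 1 := Nat.lt_floor_add_one _
      have hmem : ∀ (a : ℕ), |s| < (a : ℝ) + 1 → s ∈ Icc (-(a+1 : ℝ)) (a+1 : ℝ) := by
        intro a ha
        have := abs_lt.1 ha
        exact ⟨by linarith [this.1], by linarith [this.2]⟩
      have h1 := hEq _ _ (le_max_left ⌊|s|⌋₊ n) (hmem _ hk)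
      have h2 := hEq _ _ (le_max_right ⌊|s|⌋₊ n) (hmem _ hs)
      show f ⌊|s|⌋₊ s = f n s
      rw [h1, h2]
    have hn1 : |t| < (⌊|t|⌋₊ + 1 : ℕ) + 1 := by
      push_cast
      have := Nat.lt_floor_add_one |t|
      linarith
    have hder := hDer (⌊|t|⌋₊ + 1) t (by rw [mem_Ioo]; constructor <;> [linarith [abs_lt.1 hn1]; linarith [(abs_lt.1 hn1).2]])
    have heq : y =ᶠ[nhds t] f (⌊|t|⌋₊ + 1) := by
      filter_upwards [Metric.ball_mem_nhds t one_pos] with s hs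
      apply key
      have : |s - t| < 1 := by rwa [Metric.mem_ball, Real.dist_eq] at hs
      have h2 : |s| ≤ |t| + |s - t| := by
        calc |s| = |t + (s - t)| := by ring_nf
          _ ≤ |t| + |s - t| := abs_add_le _ _
      have := Nat.lt_floor_add_one |t|
      push_cast
      linarith
    have := hder.congr_of_eventuallyEq heq
    rwa [← key _ t (by push_cast; linarith [Nat.lt_floor_add_one |t|])] at this



section Signs
variable {N : ℕ} {B Bh : Matrix (Fin N) (Fin N) ℝ} {δ : Fin N → ℝ}

lemma cube_of_inSimplex {z : (Fin N → ℝ) × (Fin N → ℝ)} (hz : inSimplex N z) :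
    z.1 ∈ cube N := fun j => ⟨(hz j).1, by linarith [(hz j).2.1, (hz j).2.2]⟩

lemma mulVec_nonneg {M : Matrix (Fin N) (Fin N) ℝ} (hM : ∀ i j, 0 ≤ M i j)
    {v : Fin N → ℝ} (hv : ∀ j, 0 ≤ v j) : ∀ i, 0 ≤ (M *ᵥ v) i := by
  intro i
  unfold Matrix.mulVec dotProduct
  exact Finset.sum_nonneg fun j _ => mul_nonneg (hM i j) (hv j)

lemma diag_mulVec_apply (δ : Fin N → ℝ) (v : Fin N → ℝ) (j : Fin N) :
    (Matrix.diagonal δ *ᵥ v) j = δ j * v j := by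
  unfold Matrix.mulVec dotProduct
  rw [Finset.sum_eq_single j]
  · simp [Matrix.diagonal_apply_eq]
  · intro k _ hk
    simp [Matrix.diagonal_apply_ne _ (Ne.symm hk)]
  · intro h; exact absurd (Finset.mem_univ j) h

lemma field_snd_apply (z : (Fin N → ℝ) × (Fin N → ℝ)) (j : Fin N) :
    (siriField N B Bh (Matrix.diagonal δ) z).2 j
      = (∑ k, Bstar N B Bh z.1 j k * z.2 k) - δ j * z.2 j
        - z.2 j * (∑ k, Bh j k * z.2 k) := by
  show ((Bstar N B Bh z.1 - Matrix.diagonal δ) *ᵥ z.2) j - z.2 j * (Bh *ᵥ z.2) j = _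
  rw [Matrix.sub_mulVec, Pi.sub_apply, diag_mulVec_apply]
  rfl

lemma field_fst_nonpos (hB : ∀ j k, 0 ≤ B j k)
    {z : (Fin N → ℝ) × (Fin N → ℝ)} (hz : inSimplex N z) (j : Fin N) :
    (siriField N B Bh (Matrix.diagonal δ) z).1 j ≤ 0 := by
  show -(z.1 j * (B *ᵥ z.2) j) ≤ 0
  have := mulVec_nonneg hB (fun k => (hz k).2.1) j
  nlinarith [(hz j).1]

lemma field_snd_nonneg_of_zero (hB : ∀ j k, 0 ≤ B j k) (hBh : ∀ j k, 0 ≤ Bh j k)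
    {z : (Fin N → ℝ) × (Fin N → ℝ)} (hz : inSimplex N z) (j : Fin N) (hzj : z.2 j = 0) :
    0 ≤ (siriField N B Bh (Matrix.diagonal δ) z).2 j := by
  rw [field_snd_apply, hzj]
  simp only [mul_zero, zero_mul, sub_zero]
  exact Finset.sum_nonneg fun k _ =>
    mul_nonneg (Bstar_nonneg hB hBh (cube_of_inSimplex hz) j k) ((hz k).2.1)

lemma field_sum_eq (hB : ∀ j k, 0 ≤ B j k) (hBh : ∀ j k, 0 ≤ Bh j k)
    {z : (Fin N → ℝ) × (Fin N → ℝ)} (hz : inSimplex N z) (j : Fin N)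
    (hsum : z.1 j + z.2 j = 1) :
    (siriField N B Bh (Matrix.diagonal δ) z).1 j
      + (siriField N B Bh (Matrix.diagonal δ) z).2 j = -(δ j * z.2 j) := by
  rw [field_snd_apply]
  show -(z.1 j * (B *ᵥ z.2) j) + _ = _
  have hBs : ∀ k, Bstar N B Bh z.1 j k * z.2 k
      = (1 - z.1 j) * (Bh j k * z.2 k) + z.1 j * (B j k * z.2 k) := by
    intro k; rw [Bstar_apply]; ring
  rw [Finset.sum_congr rfl (fun k _ => hBs k), Finset.sum_add_distrib, ← Finset.mul_sum,
    ← Finset.mul_sum]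
  have hBv : (B *ᵥ z.2) j = ∑ k, B j k * z.2 k := rfl
  have hBhv : (Bh *ᵥ z.2) j = ∑ k, Bh j k * z.2 k := rfl
  have hz1 : 1 - z.1 j = z.2 j := by linarith
  rw [hz1, hBv]
  ring

/-- retraction facts -/
lemma retr_snd_of_neg {y : (Fin N → ℝ) × (Fin N → ℝ)} {j : Fin N} (h : y.2 j < 0) :
    (retr N y).2 j = 0 := by
  show max 0 (min (y.2 j) (1 - clamp01 (y.1 j))) = 0
  rw [max_eq_left]
  exact le_trans (min_le_left _ _) h.le

lemma retr_fst_of_neg {y : (Fin N → ℝ) × (Fin N → ℝ)} {j : Fin N} (h : y.1 j < 0) :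
    (retr N y).1 j = 0 := by
  show clamp01 (y.1 j) = 0
  unfold clamp01
  rw [min_eq_left (by linarith), max_eq_left h.le]

lemma retr_sum_of_gt {y : (Fin N → ℝ) × (Fin N → ℝ)} {j : Fin N} (h : 1 < y.1 j + y.2 j) :
    (retr N y).1 j + (retr N y).2 j = 1 := by
  show clamp01 (y.1 j) + max 0 (min (y.2 j) (1 - clamp01 (y.1 j))) = 1
  have hc := clamp01_mem (y.1 j)
  by_cases hcase : 1 - clamp01 (y.1 j) ≤ y.2 j
  · rw [min_eq_right hcase, max_eq_right (by linarith [hc.2])]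
    ring
  · push_neg at hcase
    have h1 : clamp01 (y.1 j) < y.1 j := by linarith
    have h2 : 1 < y.1 j := by
      by_contra hcon
      push_neg at hcon
      rcases le_or_gt 0 (y.1 j) with h3 | h3
      · rw [clamp01_of_mem h3 hcon] at h1; exact lt_irrefl _ h1
      · have : clamp01 (y.1 j) = 0 := by
          unfold clamp01; rw [min_eq_left (by linarith), max_eq_left h3.le]
        rw [this] at h1; linarith
    have hcl : clamp01 (y.1 j) = 1 := by
      unfold clamp01
      rw [min_eq_right h2.le, max_eq_right (by norm_num)]
    rw [hcl] at hcase ⊢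
    rw [min_eq_left (by linarith), max_eq_left (by linarith)]
    ring

end Signs

/-- Key growth estimate. -/
lemma growth_estimate {N : ℕ} (B Bh : Matrix (Fin N) (Fin N) ℝ) (δ : Fin N → ℝ)
    (hB : ∀ j k, 0 ≤ B j k) (hBh : ∀ j k, 0 ≤ Bh j k)
    (pstar : Fin N → ℝ)
    (w : Fin N → ℝ) (lam : ℝ) (hw : ∀ i, 0 < w i) (hlam : 0 < lam)
    (hineq : ∀ k, lam * w k ≤ ∑ j, w j * (Bstar N B Bh pstar - Matrix.diagonal δ) j k)
    (wmin S ε : ℝ)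
    (hwmin : ∀ j, wmin ≤ w j) (hwminpos : 0 < wmin)
    (hS : S = ∑ j, ∑ k, w j * (B j k + Bh j k))
    (hε : 0 < ε) (hεle : ε * (4 * S + 1) ≤ lam * wmin)
    (z : (Fin N → ℝ) × (Fin N → ℝ)) (hz : inSimplex N z)
    (hzI : ∀ k, z.2 k ≤ ε) (hzS : ∀ j, |z.1 j - pstar j| ≤ ε) :
    lam / 2 * (∑ j, w j * z.2 j) ≤ ∑ j, w j * (siriField N B Bh (Matrix.diagonal δ) z).2 j := by
  have hz2 : ∀ k, 0 ≤ z.2 k := fun k => (hz k).2.1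
  set L : ℝ := ∑ j, w j * z.2 j with hL
  set Sz : ℝ := ∑ k, z.2 k with hSz
  have hLnn : 0 ≤ L := Finset.sum_nonneg fun j _ => mul_nonneg (hw j).le (hz2 j)
  have hSznn : 0 ≤ Sz := Finset.sum_nonneg fun k _ => hz2 k
  have hzSz : ∀ k, z.2 k ≤ Sz := fun k =>
    Finset.single_le_sum (f := fun k => z.2 k) (fun i _ => hz2 i) (Finset.mem_univ k)
  have hSnn : 0 ≤ S := by
    rw [hS]
    exact Finset.sum_nonneg fun j _ => Finset.sum_nonneg fun k _ =>
      mul_nonneg (hw j).le (by linarith [hB j k, hBh j k])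
  have hwL : wmin * Sz ≤ L := by
    rw [hL, hSz, Finset.mul_sum]
    exact Finset.sum_le_sum fun k _ => mul_le_mul_of_nonneg_right (hwmin k) (hz2 k)
  -- decompose the sum
  have hdecomp : ∑ j, w j * (siriField N B Bh (Matrix.diagonal δ) z).2 j
      = (∑ j, w j * ∑ k, Bstar N B Bh z.1 j k * z.2 k)
        - (∑ j, w j * (δ j * z.2 j))
        - (∑ j, w j * (z.2 j * ∑ k, Bh j k * z.2 k)) := by
    rw [← Finset.sum_sub_distrib, ← Finset.sum_sub_distrib]
    apply Finset.sum_congr rfl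
    intro j _
    rw [field_snd_apply]
    ring
  -- term with pstar bounded below by lam * L
  have hmain : lam * L ≤ (∑ j, w j * ∑ k, Bstar N B Bh pstar j k * z.2 k)
      - (∑ j, w j * (δ j * z.2 j)) := by
    have h1 : (∑ j, w j * ∑ k, Bstar N B Bh pstar j k * z.2 k)
        - (∑ j, w j * (δ j * z.2 j))
        = ∑ k, (∑ j, w j * (Bstar N B Bh pstar - Matrix.diagonal δ) j k) * z.2 k := by
      have e1 : ∑ j, w j * ∑ k, Bstar N B Bh pstar j k * z.2 k
          = ∑ k, ∑ j, (w j * Bstar N B Bh pstar j k) * z.2 k := by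
        rw [Finset.sum_comm]
        apply Finset.sum_congr rfl
        intro j _
        rw [Finset.mul_sum]
        apply Finset.sum_congr rfl
        intro k _
        ring
      have e2 : ∑ j, w j * (δ j * z.2 j)
          = ∑ k, ∑ j, (w j * Matrix.diagonal δ j k) * z.2 k := by
        rw [Finset.sum_comm]
        apply Finset.sum_congr rfl
        intro j _
        rw [Finset.sum_eq_single j]
        · rw [Matrix.diagonal_apply_eq]; ring
        · intro k _ hk
          rw [Matrix.diagonal_apply_ne _ (Ne.symm hk)]; ring
        · intro h; exact absurd (Finset.mem_univ j) h
      rw [e1, e2, ← Finset.sum_sub_distrib]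
      apply Finset.sum_congr rfl
      intro k _
      rw [← Finset.sum_sub_distrib, Finset.sum_mul]
      apply Finset.sum_congr rfl
      intro j _
      rw [Matrix.sub_apply]
      ring
    rw [h1]
    have h2 : lam * L = ∑ k, (lam * w k) * z.2 k := by
      rw [hL, Finset.mul_sum]
      apply Finset.sum_congr rfl
      intro k _
      ring
    rw [h2]
    exact Finset.sum_le_sum fun k _ =>
      mul_le_mul_of_nonneg_right (hineq k) (hz2 k)
  -- perturbation term
  have hpert : (∑ j, w j * ∑ k, Bstar N B Bh pstar j k * z.2 k) - ε * S * Sz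
      ≤ ∑ j, w j * ∑ k, Bstar N B Bh z.1 j k * z.2 k := by
    have key : ∀ j k, w j * (Bstar N B Bh pstar j k * z.2 k)
        - ε * (w j * ((B j k + Bh j k) * Sz))
        ≤ w j * (Bstar N B Bh z.1 j k * z.2 k) := by
      intro j k
      have hd : Bstar N B Bh z.1 j k - Bstar N B Bh pstar j k
          = (z.1 j - pstar j) * (B j k - Bh j k) := by
        rw [Bstar_apply, Bstar_apply]
        ring
      have habs := abs_le.1 (hzS j)
      have hBk := hB j k; have hBhk := hBh j k
      have hlb : -(ε * (B j k + Bh j k)) ≤ Bstar N B Bh z.1 j k - Bstar N B Bh pstar j k := by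
        rw [hd]
        nlinarith [habs.1, habs.2]
      have hz2k := hz2 k
      have hzSzk := hzSz k
      have hwj := (hw j).le
      nlinarith [mul_le_mul_of_nonneg_right hlb hz2k,
        mul_le_mul_of_nonneg_left (mul_le_mul_of_nonneg_left hzSzk
          (by positivity : (0:ℝ) ≤ ε * (B j k + Bh j k))) hwj]
    have hsum := Finset.sum_le_sum (fun j (_ : j ∈ Finset.univ) =>
      Finset.sum_le_sum (fun k (_ : k ∈ Finset.univ) => key j k))
    have e3 : ∑ j, ∑ k, (w j * (Bstar N B Bh pstar j k * z.2 k)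
        - ε * (w j * ((B j k + Bh j k) * Sz)))
        = (∑ j, w j * ∑ k, Bstar N B Bh pstar j k * z.2 k) - ε * S * Sz := by
      have step : ∀ j, ∑ k, (w j * (Bstar N B Bh pstar j k * z.2 k)
          - ε * (w j * ((B j k + Bh j k) * Sz)))
          = w j * (∑ k, Bstar N B Bh pstar j k * z.2 k)
            - (ε * Sz) * ∑ k, w j * (B j k + Bh j k) := by
        intro j
        rw [Finset.mul_sum, Finset.mul_sum, ← Finset.sum_sub_distrib]
        apply Finset.sum_congr rfl
        intro k _
        ring
      calc ∑ j, ∑ k, (w j * (Bstar N B Bh pstar j k * z.2 k)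
            - ε * (w j * ((B j k + Bh j k) * Sz)))
          = ∑ j, (w j * (∑ k, Bstar N B Bh pstar j k * z.2 k)
            - (ε * Sz) * ∑ k, w j * (B j k + Bh j k)) :=
            Finset.sum_congr rfl (fun j _ => step j)
        _ = (∑ j, w j * ∑ k, Bstar N B Bh pstar j k * z.2 k)
            - (ε * Sz) * ∑ j, ∑ k, w j * (B j k + Bh j k) := by
            rw [Finset.sum_sub_distrib, ← Finset.mul_sum]
        _ = (∑ j, w j * ∑ k, Bstar N B Bh pstar j k * z.2 k) - ε * S * Sz := by
            rw [hS]; ring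
    have e4 : ∑ j, ∑ k, w j * (Bstar N B Bh z.1 j k * z.2 k)
        = ∑ j, w j * ∑ k, Bstar N B Bh z.1 j k * z.2 k := by
      apply Finset.sum_congr rfl
      intro j _
      rw [Finset.mul_sum]
    rw [e3, e4] at hsum
    exact hsum
  -- quadratic term
  have hquad : ∑ j, w j * (z.2 j * ∑ k, Bh j k * z.2 k) ≤ ε * S * Sz := by
    have key : ∀ j, w j * (z.2 j * ∑ k, Bh j k * z.2 k)
        ≤ (ε * Sz) * ∑ k, w j * (B j k + Bh j k) := by
      intro j
      have h1 : ∑ k, Bh j k * z.2 k ≤ ∑ k, (B j k + Bh j k) * Sz := by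
        apply Finset.sum_le_sum
        intro k _
        nlinarith [hB j k, hBh j k, hz2 k, hzSz k, hSznn]
      have h2 : 0 ≤ ∑ k, Bh j k * z.2 k :=
        Finset.sum_nonneg fun k _ => mul_nonneg (hBh j k) (hz2 k)
      have h3 : ∑ k, (B j k + Bh j k) * Sz = Sz * ∑ k, (B j k + Bh j k) := by
        rw [← Finset.sum_mul, mul_comm]
      have hzj1 := hzI j
      have hzj0 := hz2 j
      have hwj := (hw j).le
      calc w j * (z.2 j * ∑ k, Bh j k * z.2 k) ≤ w j * (ε * ∑ k, (B j k + Bh j k) * Sz) := by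
            nlinarith [mul_le_mul_of_nonneg_right hzj1 h2,
              mul_le_mul_of_nonneg_left h1 (le_trans hzj0 hzj1)]
        _ = (ε * Sz) * ∑ k, w j * (B j k + Bh j k) := by
            rw [h3]
            simp only [Finset.mul_sum]
            exact Finset.sum_congr rfl (fun k _ => by ring)
    calc ∑ j, w j * (z.2 j * ∑ k, Bh j k * z.2 k)
        ≤ ∑ j, (ε * Sz) * ∑ k, w j * (B j k + Bh j k) := Finset.sum_le_sum fun j _ => key j
      _ = ε * S * Sz := by
          rw [← Finset.mul_sum, hS]
          ring
  -- assemble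
  have hbound : 2 * (ε * S * Sz) ≤ lam / 2 * L := by
    nlinarith [mul_le_mul_of_nonneg_right hεle hSznn,
      mul_le_mul_of_nonneg_left hwL hlam.le, mul_nonneg hε.le hSznn]
  rw [hdecomp]
  linarith [hmain, hpert, hquad]

set_option maxHeartbeats 2000000 in
/-- instability of infection-free equilibria with Λ(p*) > 0. -/
theorem stmt6 {N : ℕ} (hN : 2 ≤ N) (B Bh : Matrix (Fin N) (Fin N) ℝ) (δ : Fin N → ℝ)
    (hB : ∀ j k, 0 ≤ B j k) (hBirr : MatIrreducible N B)
    (hBh : ∀ j k, 0 ≤ Bh j k) (hz : ∀ j k, B j k = 0 → Bh j k = 0)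
    (hBhirr : MatIrreducible N Bh)
    (hδ : ∀ j, 0 < δ j)
    (pstar : Fin N → ℝ) (hp : pstar ∈ cube N)
    (hpos : 0 < specAbsc N (Bstar N B Bh pstar - Matrix.diagonal δ)) :
    ∃ ε > (0:ℝ), ∀ d > (0:ℝ),
      ∃ y : ℝ → (Fin N → ℝ) × (Fin N → ℝ),
        IsSol N B Bh (Matrix.diagonal δ) y ∧
        inSimplex N (y 0) ∧
        (∀ t : ℝ, 0 ≤ t → inSimplex N (y t)) ∧
        ‖y 0 - (pstar, (0 : Fin N → ℝ))‖ < d ∧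
        ∃ t > (0:ℝ), ε ≤ ‖y t - (pstar, (0 : Fin N → ℝ))‖ := by
  classical
  haveI : NeZero N := ⟨by omega⟩
  obtain ⟨w, lam, hw, hlam, hineq⟩ :=
    exists_left_eigen_lower hN B Bh δ hB hBh hz hBhirr hδ pstar hp hpos
  set wmin : ℝ := Finset.univ.inf' Finset.univ_nonempty w with hwmindef
  have hwminpos : 0 < wmin := by
    rw [hwmindef, Finset.lt_inf'_iff]
    exact fun j _ => hw j
  have hwmin : ∀ j, wmin ≤ w j := fun j => Finset.inf'_le _ (Finset.mem_univ j)
  set S : ℝ := ∑ j, ∑ k, w j * (B j k + Bh j k) with hSdef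
  have hSnn : 0 ≤ S :=
    Finset.sum_nonneg fun j _ => Finset.sum_nonneg fun k _ =>
      mul_nonneg (hw j).le (by linarith [hB j k, hBh j k])
  set ε : ℝ := min 1 (lam * wmin / (4 * S + 1)) with hεdef
  have hεpos : 0 < ε := lt_min one_pos (by positivity)
  have hε1 : ε ≤ 1 := min_le_left _ _
  have hεle : ε * (4 * S + 1) ≤ lam * wmin := by
    have h1 : ε ≤ lam * wmin / (4 * S + 1) := min_le_right _ _
    rw [le_div_iff₀ (by positivity)] at h1
    exact h1
  refine ⟨ε, hεpos, ?_⟩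
  intro d hd
  set c : ℝ := min d ε / 2 with hcdef
  have hcpos : 0 < c := by
    rw [hcdef]
    have := lt_min hd hεpos
    positivity
  have hcd : c < d := by
    rw [hcdef]
    have := min_le_left d ε
    linarith
  have hcε : c ≤ ε / 2 := by
    rw [hcdef]
    have := min_le_right d ε
    linarith
  have hc1 : c ≤ 1 / 2 := by linarith
  set x₀ : (Fin N → ℝ) × (Fin N → ℝ) := ((fun j => min (pstar j) (1 - c)), (fun _ => c))
    with hx₀def
  have hx₀simp : inSimplex N x₀ := by
    intro j
    refine ⟨le_min (hp j).1 (by linarith), hcpos.le, ?_⟩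
    show min (pstar j) (1 - c) + c ≤ 1
    have := min_le_right (pstar j) (1 - c)
    linarith
  -- the modified field g
  set F := siriField N B Bh (Matrix.diagonal δ) with hF
  have hcd1 : ContDiff ℝ 1 F := contDiff_siriField N B Bh (Matrix.diagonal δ)
  have hcompact : IsCompact (Metric.closedBall (0 : (Fin N → ℝ) × (Fin N → ℝ)) 2) :=
    isCompact_closedBall _ _
  obtain ⟨Cf, hCf⟩ := hcompact.exists_bound_of_continuousOn
    ((hcd1.continuous_fderiv one_ne_zero).continuousOn)
  set Cnn : NNReal := ⟨max Cf 0, le_max_right _ _⟩ with hCnn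
  have hLipOn : LipschitzOnWith Cnn F (Metric.closedBall 0 2) := by
    apply Convex.lipschitzOnWith_of_nnnorm_fderiv_le
      (fun x _ => (hcd1.differentiable one_ne_zero).differentiableAt)
      (fun x hx => ?_) (convex_closedBall _ _)
    have := hCf x hx
    rw [← NNReal.coe_le_coe]
    simp only [coe_nnnorm, hCnn]
    exact le_trans this (le_max_left _ _)
  have hballK : ∀ v : (Fin N → ℝ) × (Fin N → ℝ), inSimplex N v →
      v ∈ Metric.closedBall (0 : (Fin N → ℝ) × (Fin N → ℝ)) 2 := by
    intro v hv
    rw [Metric.mem_closedBall, dist_zero_right]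
    refine le_trans ?_ one_le_two
    rw [Prod.norm_def]
    apply max_le <;> rw [pi_norm_le_iff_of_nonneg zero_le_one] <;> intro j <;>
      rw [Real.norm_eq_abs, abs_le]
    · exact ⟨by linarith [(hv j).1], by linarith [(hv j).1, (hv j).2.1, (hv j).2.2]⟩
    · exact ⟨by linarith [(hv j).2.1], by linarith [(hv j).1, (hv j).2.1, (hv j).2.2]⟩
  set g := fun x => F (retr N x) with hg
  have hgLip : LipschitzWith Cnn g := by
    apply LipschitzWith.of_dist_le_mul
    intro x y'
    calc dist (g x) (g y') ≤ Cnn * dist (retr N x) (retr N y') :=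
          hLipOn.dist_le_mul _ (hballK _ (retr_inSimplex N x)) _ (hballK _ (retr_inSimplex N y'))
      _ ≤ Cnn * dist x y' := by
          apply mul_le_mul_of_nonneg_left _ (NNReal.coe_nonneg Cnn)
          have := (retr_lipschitz N).dist_le_mul x y'
          simpa using this
  obtain ⟨Cb, hCb⟩ := hcompact.exists_bound_of_continuousOn hcd1.continuous.continuousOn
  have hgbd : ∀ x, ‖g x‖ ≤ max Cb 0 := fun x =>
    le_trans (hCb _ (hballK _ (retr_inSimplex N x))) (le_max_left _ _)
  obtain ⟨y, hy0, hyD⟩ := exists_global_solution g Cnn hgLip (max Cb 0)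
    (le_max_right _ _) hgbd x₀
  -- coordinate derivatives
  have hdS : ∀ (j : Fin N) (t : ℝ), HasDerivAt (fun t => (y t).1 j) ((g (y t)).1 j) t := by
    intro j t
    exact ((ContinuousLinearMap.proj (R := ℝ) (φ := fun _ : Fin N => ℝ) j).comp
      (ContinuousLinearMap.fst ℝ (Fin N → ℝ) (Fin N → ℝ))).hasFDerivAt.comp_hasDerivAt t (hyD t)
  have hdI : ∀ (j : Fin N) (t : ℝ), HasDerivAt (fun t => (y t).2 j) ((g (y t)).2 j) t := by
    intro j t
    exact ((ContinuousLinearMap.proj (R := ℝ) (φ := fun _ : Fin N => ℝ) j).comp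
      (ContinuousLinearMap.snd ℝ (Fin N → ℝ) (Fin N → ℝ))).hasFDerivAt.comp_hasDerivAt t (hyD t)
  -- invariance
  have hIpos : ∀ (j : Fin N) (t : ℝ), 0 ≤ t → 0 ≤ (y t).2 j := by
    intro j
    apply nonneg_of_deriv_cond (h' := fun t => (g (y t)).2 j) (fun t _ => hdI j t)
    · rw [hy0]; exact hcpos.le
    · intro t _ hneg
      have h1 : (retr N (y t)).2 j = 0 := retr_snd_of_neg hneg
      exact field_snd_nonneg_of_zero (δ := δ) hB hBh (retr_inSimplex N (y t)) j h1
  have hSpos : ∀ (j : Fin N) (t : ℝ), 0 ≤ t → 0 ≤ (y t).1 j := by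
    intro j
    apply nonneg_of_deriv_cond (h' := fun t => (g (y t)).1 j) (fun t _ => hdS j t)
    · rw [hy0]
      exact le_min (hp j).1 (by linarith)
    · intro t _ hneg
      have h1 : (retr N (y t)).1 j = 0 := retr_fst_of_neg hneg
      show (0:ℝ) ≤ (F (retr N (y t))).1 j
      show (0:ℝ) ≤ -((retr N (y t)).1 j * (B *ᵥ (retr N (y t)).2) j)
      rw [h1, zero_mul, neg_zero]
  have hsumpos : ∀ (j : Fin N) (t : ℝ), 0 ≤ t → 0 ≤ 1 - ((y t).1 j + (y t).2 j) := by
    intro j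
    apply nonneg_of_deriv_cond (h := fun t => 1 - ((y t).1 j + (y t).2 j))
      (h' := fun t => -((g (y t)).1 j + (g (y t)).2 j))
      (fun t _ => ((hdS j t).add (hdI j t)).const_sub 1)
    · rw [hy0]
      show (0:ℝ) ≤ 1 - (min (pstar j) (1 - c) + c)
      have := min_le_right (pstar j) (1 - c)
      linarith
    · intro t _ hneg
      have hgt : 1 < (y t).1 j + (y t).2 j := by linarith
      have h1 : (retr N (y t)).1 j + (retr N (y t)).2 j = 1 := retr_sum_of_gt hgt
      have h2 := field_sum_eq (δ := δ) hB hBh (retr_inSimplex N (y t)) j h1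
      have h3 : 0 ≤ (retr N (y t)).2 j := (retr_inSimplex N (y t) j).2.1
      show 0 ≤ -((F (retr N (y t))).1 j + (F (retr N (y t))).2 j)
      rw [h2]
      have := hδ j
      nlinarith
  have hsimplex : ∀ t : ℝ, 0 ≤ t → inSimplex N (y t) := fun t ht j =>
    ⟨hSpos j t ht, hIpos j t ht, by linarith [hsumpos j t ht]⟩
  have hretr : ∀ t : ℝ, 0 ≤ t → g (y t) = F (y t) := by
    intro t ht
    rw [hg]
    simp only []
    rw [retr_eq_self (hsimplex t ht)]
  have hsol : IsSol N B Bh (Matrix.diagonal δ) y := by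
    intro t ht
    have := hyD t
    rwa [hretr t ht] at this
  -- initial distance
  have hdist0 : ‖y 0 - (pstar, (0 : Fin N → ℝ))‖ ≤ c := by
    rw [hy0, Prod.norm_def]
    apply max_le <;> rw [pi_norm_le_iff_of_nonneg hcpos.le] <;> intro j <;>
      rw [Real.norm_eq_abs, abs_le]
    · constructor
      · show -c ≤ min (pstar j) (1 - c) - pstar j
        have h1 : 1 - c - pstar j ≥ -c := by linarith [(hp j).2]
        rcases min_cases (pstar j) (1 - c) with ⟨h, _⟩ | ⟨h, _⟩ <;> rw [h] <;> linarith
      · show min (pstar j) (1 - c) - pstar j ≤ c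
        have := min_le_left (pstar j) (1 - c)
        linarith
    · show -c ≤ c - 0 ∧ c - 0 ≤ c
      constructor <;> linarith
  refine ⟨y, hsol, hsimplex 0 le_rfl, hsimplex, lt_of_le_of_lt hdist0 hcd, ?_⟩
  by_contra hcon
  push_neg at hcon
  have hballε : ∀ t : ℝ, 0 ≤ t → ‖y t - (pstar, (0 : Fin N → ℝ))‖ ≤ ε := by
    intro t ht
    rcases eq_or_lt_of_le ht with h | h
    · rw [← h]; linarith
    · exact (hcon t h).le
  have hcoordI : ∀ t : ℝ, 0 ≤ t → ∀ k, (y t).2 k ≤ ε := by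
    intro t ht k
    have h1 : ‖(y t - (pstar, (0 : Fin N → ℝ))).2‖ ≤ ε :=
      le_trans (norm_snd_le _) (hballε t ht)
    have h2 : (y t - (pstar, (0 : Fin N → ℝ))).2 = (y t).2 := by
      simp [Prod.snd_sub]
    rw [h2] at h1
    have h3 := norm_le_pi_norm ((y t).2) k
    rw [Real.norm_eq_abs] at h3
    calc (y t).2 k ≤ |(y t).2 k| := le_abs_self _
      _ ≤ ε := le_trans h3 h1
  have hcoordS : ∀ t : ℝ, 0 ≤ t → ∀ j, |(y t).1 j - pstar j| ≤ ε := by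
    intro t ht j
    have h1 : ‖(y t - (pstar, (0 : Fin N → ℝ))).1‖ ≤ ε :=
      le_trans (norm_fst_le _) (hballε t ht)
    have h2 : (y t - (pstar, (0 : Fin N → ℝ))).1 = (y t).1 - pstar := by
      simp [Prod.fst_sub]
    rw [h2] at h1
    have h3 := norm_le_pi_norm ((y t).1 - pstar) j
    rw [Real.norm_eq_abs] at h3
    exact le_trans h3 h1
  -- growth of the weighted infection mass
  set Lf : ℝ → ℝ := fun t => ∑ j, w j * (y t).2 j with hLf
  have hLder : ∀ t : ℝ, HasDerivAt Lf (∑ j, w j * (g (y t)).2 j) t := by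
    intro t
    exact HasDerivAt.fun_sum fun j _ => (hdI j t).const_mul (w j)
  have hLnn : ∀ t : ℝ, 0 ≤ t → 0 ≤ Lf t := fun t ht =>
    Finset.sum_nonneg fun j _ => mul_nonneg (hw j).le (hIpos j t ht)
  have hgrow : ∀ t : ℝ, 0 ≤ t → lam / 2 * Lf t ≤ ∑ j, w j * (g (y t)).2 j := by
    intro t ht
    have h1 := growth_estimate B Bh δ hB hBh pstar w lam hw hlam hineq wmin S ε
      hwmin hwminpos hSdef hεpos hεle (y t) (hsimplex t ht) (hcoordI t ht) (hcoordS t ht)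
    rw [hretr t ht]
    exact h1
  set G : ℝ → ℝ := fun t => Lf t * Real.exp (-(lam / 2) * t) with hGdef
  have hEder : ∀ t : ℝ, HasDerivAt (fun t : ℝ => Real.exp (-(lam / 2) * t))
      (Real.exp (-(lam / 2) * t) * -(lam / 2)) t := by
    intro t
    have h1 : HasDerivAt (fun t : ℝ => -(lam / 2) * t) (-(lam / 2)) t := by
      simpa using (hasDerivAt_id t).const_mul (-(lam / 2))
    exact h1.exp
  have hGder : ∀ t : ℝ, HasDerivAt G
      ((∑ j, w j * (g (y t)).2 j) * Real.exp (-(lam / 2) * t)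
        + Lf t * (Real.exp (-(lam / 2) * t) * -(lam / 2))) t :=
    fun t => (hLder t).mul (hEder t)
  have hmono : MonotoneOn G (Ici (0:ℝ)) := by
    apply monotoneOn_of_deriv_nonneg (convex_Ici 0)
    · exact fun t _ => (hGder t).continuousAt.continuousWithinAt
    · intro t _
      exact (hGder t).differentiableAt.differentiableWithinAt
    · intro t ht
      rw [interior_Ici] at ht
      rw [(hGder t).deriv]
      have h1 := hgrow t ht.le
      have h2 := Real.exp_pos (-(lam / 2) * t)
      have h3 := hLnn t ht.le
      nlinarith
  have hW : 0 < ∑ j, w j :=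
    Finset.sum_pos (fun j _ => hw j) Finset.univ_nonempty
  have hL0 : Lf 0 = c * ∑ j, w j := by
    rw [hLf]
    simp only [hy0]
    rw [Finset.mul_sum]
    exact Finset.sum_congr rfl fun j _ => by show w j * c = c * w j; ring
  have hLle : ∀ t : ℝ, 0 ≤ t → Lf t ≤ ∑ j, w j := by
    intro t ht
    apply Finset.sum_le_sum
    intro j _
    have h1 := (hsimplex t ht j).1
    have h2 := (hsimplex t ht j).2.2
    nlinarith [hw j]
  set T : ℝ := 4 / (lam * c) with hT
  have hTpos : 0 < T := by positivity
  have hmT := hmono (self_mem_Ici) (mem_Ici.2 hTpos.le) hTpos.le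
  have hG0 : G 0 = c * ∑ j, w j := by
    rw [hGdef]
    simp only []
    rw [mul_zero, Real.exp_zero, mul_one, hL0]
  have hGT : G T ≤ (∑ j, w j) * Real.exp (-(lam / 2) * T) := by
    rw [hGdef]
    simp only []
    exact mul_le_mul_of_nonneg_right (hLle T hTpos.le) (Real.exp_pos _).le
  have hkey : c ≤ Real.exp (-(lam / 2) * T) := by
    have h1 : c * ∑ j, w j ≤ (∑ j, w j) * Real.exp (-(lam / 2) * T) := by
      rw [← hG0]
      exact le_trans hmT hGT
    nlinarith [Real.exp_pos (-(lam / 2) * T)]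
  -- contradiction
  have hx : -(lam / 2) * T = -(2 / c) := by
    rw [hT]
    field_simp
    ring
  rw [hx, Real.exp_neg] at hkey
  have h5 : c * Real.exp (2 / c) ≤ 1 := by
    have h6 := Real.exp_pos (2 / c)
    calc c * Real.exp (2 / c) ≤ (Real.exp (2 / c))⁻¹ * Real.exp (2 / c) :=
          mul_le_mul_of_nonneg_right hkey h6.le
      _ = 1 := inv_mul_cancel₀ h6.ne'
  have h7 : 2 / c + 1 ≤ Real.exp (2 / c) := Real.add_one_le_exp _
  have h8 : c * (2 / c) = 2 := by field_simp
  nlinarith [Real.exp_pos (2 / c)]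
end
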